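/- arXiv:1108.1721 — 8 statements merged into one kernel-verified Lean document; each statement's English description precedes it below -/
import Mathlib

section
/- If a Hausdorff locally convex space E contains a Schauder basis, or even only a weak Schauder basis, then E possesses the bounded approximation property. -/
/-
Setting: `E` is a Hausdorff locally convex topological vector space over `𝕜 = ℝ` or `ℂ`
(`RCLike 𝕜`), with `E' = E →L[𝕜] 𝕜` its (strong) dual.
-/

open Filter Topology Bornology

section Prelude

variable (𝕜 : Type) [RCLike 𝕜]

/-- A continuous linear operator on `E` is of finite rank if its range is
finite-dimensional. -/
def IsFiniteRank {E : Type} [AddCommGroup E] [Module 𝕜 E] [TopologicalSpace E]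
    (A : E →L[𝕜] E) : Prop :=
  FiniteDimensional 𝕜 (LinearMap.range (A : E →ₗ[𝕜] E))

/-- The ordinary trace `sp` of a (finite-rank) operator: the trace of the endomorphism
that it induces on its image. -/
noncomputable def sp {E : Type} [AddCommGroup E] [Module 𝕜 E] [TopologicalSpace E]
    (A : E →L[𝕜] E) : 𝕜 :=
  LinearMap.trace 𝕜 (LinearMap.range (A : E →ₗ[𝕜] E))
    ((A : E →ₗ[𝕜] E).restrict (fun x _ => LinearMap.mem_range_self _ x))

/-- The bounded approximation property: there is a net of finite-rank operators that
converges to the identity operator in the weak operator topology and is bounded in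
that topology. -/
def HasBAP (E : Type) [AddCommGroup E] [Module 𝕜 E] [TopologicalSpace E] : Prop :=
  ∃ (ι : Type) (lfil : Filter ι) (T : ι → E →L[𝕜] E), lfil.NeBot ∧
    (∀ ν, IsFiniteRank 𝕜 (T ν)) ∧
    (∀ (x : E) (f : E →L[𝕜] 𝕜), Tendsto (fun ν => f (T ν x)) lfil (𝓝 (f x))) ∧
    (∀ (x : E) (f : E →L[𝕜] 𝕜), ∃ C : ℝ, ∀ ν, ‖f (T ν x)‖ ≤ C)

/-- The approximation property: the finite-rank operators are dense in `L(E)` for the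
topology of uniform convergence on precompact (totally bounded) subsets of `E`. -/
def HasAP (E : Type) [AddCommGroup E] [Module 𝕜 E] [UniformSpace E] : Prop :=
  ∀ (A : E →L[𝕜] E) (S : Set E), TotallyBounded S → ∀ U ∈ 𝓝 (0 : E),
    ∃ F : E →L[𝕜] E, IsFiniteRank 𝕜 F ∧ ∀ x ∈ S, A x - F x ∈ U

/-- The weak approximation property: the finite-rank operators are dense in `L(E)` for
the topology of uniform convergence on absolutely convex compact subsets of `E`. -/
def HasWeakAP (E : Type) [AddCommGroup E] [Module 𝕜 E] [Module ℝ E]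
    [TopologicalSpace E] : Prop :=
  ∀ (A : E →L[𝕜] E) (K : Set E), IsCompact K → Balanced 𝕜 K → Convex ℝ K →
    ∀ U ∈ 𝓝 (0 : E), ∃ F : E →L[𝕜] E, IsFiniteRank 𝕜 F ∧ ∀ x ∈ K, A x - F x ∈ U

/-- A linear operator is weakly continuous iff the composition with every continuous
linear functional is again a continuous linear functional. -/
def IsWeaklyContinuous {E : Type} [AddCommGroup E] [Module 𝕜 E] [TopologicalSpace E]
    (A : E →ₗ[𝕜] E) : Prop :=
  ∀ f : E →L[𝕜] 𝕜, Continuous fun v => f (A v)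

/-- `B` is an absolutely convex bounded set such that the normed space `E_B`
(the span of `B` with the gauge of `B` as norm) is complete, i.e. a Banach disk.
(Completeness of the normed space `E_B` is expressed as sequential completeness for
the gauge of `B`, which is equivalent since `E_B` is metrizable.) -/
def IsBanachDisk {V : Type} [AddCommGroup V] [Module 𝕜 V] [Module ℝ V]
    [TopologicalSpace V] (B : Set V) : Prop :=
  Balanced 𝕜 B ∧ Convex ℝ B ∧ IsVonNBounded 𝕜 B ∧
    ∀ u : ℕ → V, (∀ n, u n ∈ Submodule.span 𝕜 B) →
      (∀ ε : ℝ, 0 < ε → ∃ N : ℕ, ∀ m ≥ N, ∀ n ≥ N, gauge B (u m - u n) < ε) →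
      ∃ v ∈ Submodule.span 𝕜 B, ∀ ε : ℝ, 0 < ε → ∃ N : ℕ, ∀ n ≥ N, gauge B (v - u n) < ε

/-- The data of a Fredholm kernel: a summable sequence of scalars, a sequence in a
Banach disk `B ⊆ E` and a sequence in a Banach disk `B' ⊆ E'`. -/
def FredholmKernelSeqs {E : Type} [AddCommGroup E] [Module 𝕜 E] [Module ℝ E]
    [TopologicalSpace E] [IsTopologicalAddGroup E]
    (l : ℕ → 𝕜) (x : ℕ → E) (x' : ℕ → E →L[𝕜] 𝕜) : Prop :=
  (Summable fun i => ‖l i‖) ∧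
  (∃ B : Set E, IsBanachDisk 𝕜 B ∧ ∀ i, x i ∈ B) ∧
  (∃ B' : Set (E →L[𝕜] 𝕜), IsBanachDisk 𝕜 B' ∧ ∀ i, x' i ∈ B')

/-- `A` is represented as the Fredholm operator `v ↦ ∑_{i=1}^∞ λ_i ⟨x'_i, v⟩ x_i`,
where `∑ |λ_i| < ∞`, `{x_i} ⊆ B ⊆ E` and `{x'_i} ⊆ B' ⊆ E'` with `B`, `B'` absolutely
convex bounded sets such that `E_B` and `E'_{B'}` are complete. -/
def FredholmRep {E : Type} [AddCommGroup E] [Module 𝕜 E] [Module ℝ E]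
    [TopologicalSpace E] [IsTopologicalAddGroup E]
    (A : E → E) (l : ℕ → 𝕜) (x : ℕ → E) (x' : ℕ → E →L[𝕜] 𝕜) : Prop :=
  FredholmKernelSeqs 𝕜 l x x' ∧
  ∀ v : E, Tendsto (fun n => ∑ i ∈ Finset.range n, (l i * x' i v) • x i) atTop (𝓝 (A v))

/-- `A` is represented as the nuclear operator `v ↦ ∑_{i=1}^∞ λ_i ⟨x'_i, v⟩ x_i`,
where `∑ |λ_i| < ∞`, `{x_i}` lies in an absolutely convex bounded complete set `B ⊆ E`
and `{x'_i}` is equicontinuous, i.e. lies in the polar of a neighborhood of zero. -/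
def NuclearRep {E : Type} [AddCommGroup E] [Module 𝕜 E] [Module ℝ E]
    [UniformSpace E] [IsUniformAddGroup E]
    (A : E → E) (l : ℕ → 𝕜) (x : ℕ → E) (x' : ℕ → E →L[𝕜] 𝕜) : Prop :=
  (Summable fun i => ‖l i‖) ∧
  (∃ B : Set E, Balanced 𝕜 B ∧ Convex ℝ B ∧ IsVonNBounded 𝕜 B ∧ IsComplete B ∧
    ∀ i, x i ∈ B) ∧
  (∃ U ∈ 𝓝 (0 : E), ∀ i, ∀ v ∈ U, ‖(x' i) v‖ ≤ 1) ∧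
  ∀ v : E, Tendsto (fun n => ∑ i ∈ Finset.range n, (l i * x' i v) • x i) atTop (𝓝 (A v))

end Prelude

variable {𝕜 : Type} [RCLike 𝕜] {E : Type} [AddCommGroup E] [Module 𝕜 E]
  [UniformSpace E] [IsUniformAddGroup E] [ContinuousSMul 𝕜 E]
  [Module ℝ E] [IsScalarTower ℝ 𝕜 E] [LocallyConvexSpace ℝ E] [T2Space E]

/-- If a Hausdorff locally convex space `E` contains a Schauder basis, or
even only a weak Schauder basis, then `E` possesses the bounded approximation property.
The (weak) Schauder basis `{e_i}` with biorthogonal coefficient functionals `{e'_i}` is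
given by the weak convergence of the expansion `x = ∑_{i=1}^∞ ⟨e'_i, x⟩ e_i` together
with the uniqueness of the coefficients. -/
theorem statement1 (e : ℕ → E) (e' : ℕ → E →L[𝕜] 𝕜)
    (hexp : ∀ (x : E) (f : E →L[𝕜] 𝕜),
      Filter.Tendsto (fun n => f (∑ i ∈ Finset.range n, (e' i x) • e i))
        Filter.atTop (𝓝 (f x)))
    (huniq : ∀ (x : E) (ξ : ℕ → 𝕜),
      (∀ f : E →L[𝕜] 𝕜, Filter.Tendsto (fun n => f (∑ i ∈ Finset.range n, ξ i • e i))
          Filter.atTop (𝓝 (f x))) →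
      ∀ i, ξ i = e' i x) :
    HasBAP 𝕜 E := by
  unfold HasBAP
  refine ⟨ℕ, atTop, fun n => ∑ i ∈ Finset.range n, (e' i).smulRight (e i),
    ⟨atTop_neBot, fun n => ?_, fun x f => ?_, fun x f => ?_⟩⟩
  · have hle : LinearMap.range ((∑ i ∈ Finset.range n, (e' i).smulRight (e i) : E →L[𝕜] E) :
        E →ₗ[𝕜] E) ≤ Submodule.span 𝕜 (e '' Set.Iio n) := by
      rintro y ⟨v, rfl⟩
      simp only [ContinuousLinearMap.coe_coe, ContinuousLinearMap.sum_apply,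
        ContinuousLinearMap.smulRight_apply]
      refine Submodule.sum_mem _ fun i hi => Submodule.smul_mem _ _ ?_
      exact Submodule.subset_span ⟨i, Finset.mem_range.mp hi, rfl⟩
    have : FiniteDimensional 𝕜 (Submodule.span 𝕜 (e '' Set.Iio n)) :=
      FiniteDimensional.span_of_finite 𝕜 ((Set.finite_Iio n).image e)
    exact Submodule.finiteDimensional_of_le hle
  · simpa only [ContinuousLinearMap.sum_apply, ContinuousLinearMap.smulRight_apply]
      using hexp x f
  · have h := ((hexp x f).norm).bddAbove_range
    obtain ⟨C, hC⟩ := h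
    exact ⟨C, fun n => by
      simpa only [ContinuousLinearMap.sum_apply, ContinuousLinearMap.smulRight_apply]
        using hC (Set.mem_range_self n)⟩
end

section
/- A Hausdorff locally convex space E possesses the bounded approximation property if and only if there exists a net of finite-rank operators on E that converges to the identity operator in the strong operator topology (the topology of pointwise convergence) and is bounded in that topology. -/
/-
Setting: `E` is a Hausdorff locally convex topological vector space over `𝕜 = ℝ` or `ℂ`
(`RCLike 𝕜`), with `E' = E →L[𝕜] 𝕜` its (strong) dual.
-/

open Filter Topology Bornology

variable {𝕜 : Type} [RCLike 𝕜] {E : Type} [AddCommGroup E] [Module 𝕜 E]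
  [UniformSpace E] [IsUniformAddGroup E] [ContinuousSMul 𝕜 E]
  [Module ℝ E] [IsScalarTower ℝ 𝕜 E] [LocallyConvexSpace ℝ E] [T2Space E]

open Set in
/-- **Mackey's theorem**: a weakly bounded set is von Neumann bounded. -/
theorem mackey_bounded (S : Set E)
    (h : ∀ f : E →L[𝕜] 𝕜, ∃ C : ℝ, ∀ v ∈ S, ‖f v‖ ≤ C) :
    Bornology.IsVonNBounded 𝕜 S := by
  haveI : ContinuousSMul ℝ E := IsScalarTower.continuousSMul 𝕜
  haveI : SMulCommClass ℝ 𝕜 E := ⟨fun r a v => by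
    rw [← smul_one_smul 𝕜 r (a • v), ← smul_one_smul 𝕜 r v, smul_smul, smul_smul, mul_comm]⟩
  intro V hV
  obtain ⟨W, ⟨hW0, hWbal, hWconv⟩, hWV⟩ : ∃ W : Set E,
      (W ∈ 𝓝 (0 : E) ∧ Balanced 𝕜 W ∧ Convex ℝ W) ∧ W ⊆ V := by
    obtain ⟨s, ⟨hs0, hsc⟩, hsV⟩ := (LocallyConvexSpace.convex_basis_zero ℝ E).mem_iff.1 hV
    have hcc : Convex ℝ (balancedCore 𝕜 s) := by
      rw [balancedCore_eq_iInter (mem_of_mem_nhds hs0)]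
      refine convex_iInter₂ fun r _ => ?_
      rintro _ ⟨a, ha, rfl⟩ _ ⟨b, hb, rfl⟩ α β hα hβ hαβ
      refine ⟨α • a + β • b, hsc ha hb hα hβ hαβ, ?_⟩
      show r • (α • a + β • b) = α • r • a + β • r • b
      rw [smul_add, smul_comm r α a, smul_comm r β b]
    exact ⟨balancedCore 𝕜 s, ⟨balancedCore_mem_nhds_zero hs0, balancedCore_balanced s, hcc⟩,
      (balancedCore_subset s).trans hsV⟩
  have habs : Absorbent ℝ W := absorbent_nhds_zero hW0
  have hsymm : ∀ w ∈ W, -w ∈ W := fun w hw => by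
    have : ((-1 : 𝕜)) • w ∈ W := hWbal.smul_mem (by simp) hw
    simpa using this
  have hg0 : ∀ x : E, (0:ℝ) ≤ gauge W x := fun x => gauge_nonneg x
  have hgneg : ∀ x : E, gauge W (-x) = gauge W x := gauge_neg hsymm
  -- `K` : the set of linear functionals dominated by the gauge of `W`
  set K : Set (E → ℝ) := {f | (∀ x y, f (x + y) = f x + f y) ∧
      (∀ (c : ℝ) (x : E), f (c • x) = c * f x) ∧ ∀ x, |f x| ≤ gauge W x} with hKdef
  have hzeroK : (fun _ : E => (0:ℝ)) ∈ K := by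
    refine ⟨by simp, by simp, fun x => by simpa using hg0 x⟩
  -- K is compact
  have hKclosed : IsClosed K := by
    have h1 : IsClosed {f : E → ℝ | ∀ x y, f (x + y) = f x + f y} := by
      simp only [setOf_forall]
      exact isClosed_iInter fun x => isClosed_iInter fun y =>
        isClosed_eq (continuous_apply (x + y)) ((continuous_apply x).add (continuous_apply y))
    have h2 : IsClosed {f : E → ℝ | ∀ (c : ℝ) (x : E), f (c • x) = c * f x} := by
      simp only [setOf_forall]
      exact isClosed_iInter fun c => isClosed_iInter fun x =>
        isClosed_eq (continuous_apply (c • x)) (continuous_const.mul (continuous_apply x))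
    have h3 : IsClosed {f : E → ℝ | ∀ x, |f x| ≤ gauge W x} := by
      simp only [setOf_forall]
      exact isClosed_iInter fun x =>
        isClosed_le (continuous_apply x).abs continuous_const
    have : K = {f : E → ℝ | ∀ x y, f (x + y) = f x + f y} ∩
        ({f : E → ℝ | ∀ (c : ℝ) (x : E), f (c • x) = c * f x} ∩
          {f : E → ℝ | ∀ x, |f x| ≤ gauge W x}) := by
      ext f; simp [hKdef, and_assoc]
    rw [this]
    exact h1.inter (h2.inter h3)
  have hKcompact : IsCompact K := by
    refine IsCompact.of_isClosed_subset
      (isCompact_univ_pi (fun x => isCompact_Icc (a := -(gauge W x)) (b := gauge W x)))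
      hKclosed ?_
    intro f hf
    intro x _
    exact abs_le.1 (hf.2.2 x)
  -- every element of K is continuous on E
  have hgc : Continuous (gauge W) := continuous_gauge hWconv hW0
  have hfcont : ∀ f ∈ K, Continuous f := by
    intro f hf
    obtain ⟨hadd, hsmul, hle⟩ := hf
    have hneg : ∀ x, f (-x) = -f x := fun x => by
      have := hsmul (-1) x; simpa using this
    rw [continuous_iff_continuousAt]
    intro x₀
    have key : Tendsto (fun x => f x - f x₀) (𝓝 x₀) (𝓝 0) := by
      apply squeeze_zero_norm (f := fun x => f x - f x₀) (a := fun x => gauge W (x - x₀))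
      · intro x
        have : f x - f x₀ = f (x - x₀) := by
          rw [sub_eq_add_neg x x₀, hadd, hneg]; ring
        rw [Real.norm_eq_abs, this]
        exact hle _
      · have h1 : Tendsto (fun x => x - x₀) (𝓝 x₀) (𝓝 (0:E)) := by
          have : Tendsto (fun x => x - x₀) (𝓝 x₀) (𝓝 (x₀ - x₀)) :=
            (continuous_id.sub continuous_const).tendsto x₀
          simpa using this
        have := (hgc.tendsto 0).comp h1
        simpa [gauge_zero, Function.comp_def] using this
    have := key.add (tendsto_const_nhds (x := f x₀))
    simpa [ContinuousAt] using this
  -- pointwise bound on S for each f in K, via extension to a 𝕜-functional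
  have hbound : ∀ f ∈ K, ∃ C : ℝ, ∀ v ∈ S, |f v| ≤ C := by
    intro f hf
    obtain ⟨hadd, hsmul, hle⟩ := hf
    let fl : E →ₗ[ℝ] ℝ :=
      { toFun := f, map_add' := hadd, map_smul' := fun c x => hsmul c x }
    let F : E →ₗ[𝕜] 𝕜 := fl.extendTo𝕜'
    have hFcont : Continuous F := by
      have hfc : Continuous f := hfcont f ⟨hadd, hsmul, hle⟩
      have h2 : Continuous fun x : E =>
          ((f x : 𝕜) - (RCLike.I : 𝕜) * (f ((RCLike.I : 𝕜) • x) : 𝕜)) := by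
        fun_prop
      exact h2
    obtain ⟨C, hC⟩ := h ⟨F, hFcont⟩
    refine ⟨C, fun v hv => ?_⟩
    have h1 : RCLike.re (F v) = f v := fl.extendTo𝕜'_apply_re v
    calc |f v| = |RCLike.re (F v)| := by rw [h1]
      _ ≤ ‖F v‖ := RCLike.abs_re_le_norm _
      _ ≤ C := hC v hv
  -- Baire category on the compact set K
  haveI : CompactSpace ↥K := isCompact_iff_compactSpace.mp hKcompact
  haveI : Nonempty ↥K := ⟨⟨_, hzeroK⟩⟩
  have hGclosed : ∀ n : ℕ, IsClosed {f : ↥K | ∀ x ∈ S, |f.1 x| ≤ (n:ℝ)} := by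
    intro n
    simp only [setOf_forall]
    exact isClosed_iInter fun x => isClosed_iInter fun _ =>
      isClosed_le ((continuous_apply x).comp continuous_subtype_val).abs continuous_const
  have hGcover : ⋃ n : ℕ, {f : ↥K | ∀ x ∈ S, |f.1 x| ≤ (n:ℝ)} = univ := by
    refine eq_univ_of_forall fun f => ?_
    obtain ⟨C, hC⟩ := hbound f.1 f.2
    obtain ⟨n, hn⟩ := exists_nat_ge C
    exact mem_iUnion.2 ⟨n, fun x hx => (hC x hx).trans hn⟩
  obtain ⟨n, f₀, hf₀⟩ := nonempty_interior_of_iUnion_of_closed hGclosed hGcover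
  have hf₀G : ∀ x ∈ S, |f₀.1 x| ≤ (n:ℝ) := interior_subset hf₀
  -- extract a basic neighborhood
  have hmem : {f : ↥K | ∀ x ∈ S, |f.1 x| ≤ (n:ℝ)} ∈ 𝓝 f₀ := mem_interior_iff_mem_nhds.1 hf₀
  rw [nhds_subtype] at hmem
  obtain ⟨t, ht, hts⟩ := hmem
  rw [nhds_pi, Filter.mem_pi] at ht
  obtain ⟨I, hIfin, Vn, hVn, hVt⟩ := ht
  have hballs : ∀ i : E, ∃ ε : ℝ, 0 < ε ∧ Metric.ball (f₀.1 i) ε ⊆ Vn i := by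
    intro i
    obtain ⟨ε, hε, hsub⟩ := Metric.mem_nhds_iff.1 (hVn i)
    exact ⟨ε, hε, hsub⟩
  choose εf hεf hεb using hballs
  classical
  set J : Finset E := insert 0 hIfin.toFinset with hJ
  have hJne : J.Nonempty := ⟨0, Finset.mem_insert_self _ _⟩
  set ε : ℝ := J.inf' hJne εf with hε
  have hεpos : 0 < ε := by
    rw [hε]
    exact (Finset.lt_inf'_iff hJne).2 fun i _ => hεf i
  have hεle : ∀ i ∈ I, ε ≤ εf i := fun i hi =>
    Finset.inf'_le _ (Finset.mem_insert_of_mem (hIfin.mem_toFinset.2 hi))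
  -- the key neighborhood property
  have key : ∀ f, (hfK : f ∈ K) → (∀ x ∈ I, |f x - f₀.1 x| < ε) → ∀ x ∈ S, |f x| ≤ (n:ℝ) := by
    intro f hfK hclose x hx
    have hft : f ∈ t := by
      apply hVt
      intro i hi
      apply hεb i
      rw [Metric.mem_ball, Real.dist_eq]
      exact lt_of_lt_of_le (hclose i hi) (hεle i hi)
    exact hts (show (⟨f, hfK⟩ : ↥K) ∈ Subtype.val ⁻¹' t from hft) x hx
  -- the uniform bound via convexity
  set Bs : ℝ := J.sup' hJne (fun x => gauge W x) with hBs
  have hBs0 : 0 ≤ Bs := le_trans (hg0 0) (Finset.le_sup' _ (Finset.mem_insert_self _ _))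
  have hBsI : ∀ i ∈ I, gauge W i ≤ Bs := fun i hi =>
    Finset.le_sup' _ (Finset.mem_insert_of_mem (hIfin.mem_toFinset.2 hi))
  set d : ℝ := ε + 1 + 2 * Bs with hd
  have hdpos : 0 < d := by positivity
  set τ : ℝ := ε / d with hτ
  have hτpos : 0 < τ := div_pos hεpos hdpos
  have hτle1 : τ ≤ 1 := by
    rw [hτ, div_le_one hdpos, hd]
    nlinarith [hεpos, hBs0]
  have hM : ∀ f ∈ K, ∀ x ∈ S, |f x| ≤ 2 * n / τ := by
    intro f hfK x hx
    obtain ⟨hadd, hsmul, hle⟩ := hfK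
    set g : E → ℝ := fun v => (1 - τ) * f₀.1 v + τ * f v with hg
    have hf₀K := f₀.2
    have hgK : g ∈ K := by
      refine ⟨fun a b => by simp only [hg, hf₀K.1 a b, hadd]; ring,
        fun c a => by simp only [hg, hf₀K.2.1 c a, hsmul]; ring,
        fun a => ?_⟩
      calc |g a| ≤ (1 - τ) * |f₀.1 a| + τ * |f a| := by
            rw [hg]
            refine (abs_add_le _ _).trans ?_
            rw [abs_mul, abs_mul, abs_of_nonneg (show (0:ℝ) ≤ 1 - τ by linarith), abs_of_nonneg hτpos.le]
        _ ≤ (1 - τ) * gauge W a + τ * gauge W a := by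
            have h1 := hf₀K.2.2 a
            have h2 := hle a
            have h3 := mul_le_mul_of_nonneg_left h1 (by linarith : (0:ℝ) ≤ 1 - τ)
            have h4 := mul_le_mul_of_nonneg_left h2 hτpos.le
            linarith
        _ = gauge W a := by ring
    have hgn : ∀ y ∈ S, |g y| ≤ (n:ℝ) := by
      apply key g hgK
      intro i hi
      have heq : g i - f₀.1 i = τ * (f i - f₀.1 i) := by rw [hg]; ring
      rw [heq, abs_mul, abs_of_nonneg hτpos.le]
      have h1 : |f i - f₀.1 i| ≤ 2 * Bs := by
        have ha := hle i
        have hb := hf₀K.2.2 i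
        have hc := hBsI i hi
        have habs2 : |f i - f₀.1 i| ≤ |f i| + |f₀.1 i| := abs_sub _ _
        linarith
      calc τ * |f i - f₀.1 i| ≤ τ * (2 * Bs) := by nlinarith
        _ < ε := by
          rw [hτ, hd]
          rw [div_mul_eq_mul_div, div_lt_iff₀ hdpos]
          nlinarith
    have h1 : τ * f x = g x - (1 - τ) * f₀.1 x := by rw [hg]; ring
    have h2 : τ * |f x| ≤ 2 * n := by
      have h3 : |τ * f x| ≤ |g x| + (1 - τ) * |f₀.1 x| := by
        rw [h1]
        refine (abs_sub _ _).trans ?_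
        rw [abs_mul, abs_of_nonneg (show (0:ℝ) ≤ 1 - τ by linarith)]
      rw [abs_mul, abs_of_nonneg hτpos.le] at h3
      have h4 := hgn x hx
      have h5 := hf₀G x hx
      have h6 : (0:ℝ) ≤ |f₀.1 x| := abs_nonneg _
      nlinarith
    rw [le_div_iff₀ hτpos]
    linarith [h2]
  set M : ℝ := 2 * n / τ with hMdef
  have hM0 : 0 ≤ M := by positivity
  -- Hahn–Banach: the gauge is bounded by M on S
  have hgsmul : ∀ (c : ℝ), 0 ≤ c → ∀ x : E, gauge W (c • x) = c * gauge W x := by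
    intro c hc x
    rw [gauge_smul_of_nonneg hc, smul_eq_mul]
  have hgabs : ∀ (c : ℝ) (x : E), gauge W (c • x) = |c| * gauge W x := by
    intro c x
    rcases le_or_gt 0 c with hc | hc
    · rw [hgsmul c hc, abs_of_nonneg hc]
    · have heq : c • x = -((-c) • x) := by rw [neg_smul, neg_neg]
      rw [heq, hgneg, hgsmul (-c) (by linarith), abs_of_neg hc]
  have hgaugeS : ∀ x ∈ S, gauge W x ≤ M := by
    intro x hx
    rcases eq_or_ne x 0 with rfl | hx0
    · rw [gauge_zero]; exact hM0
    · set fp : E →ₗ.[ℝ] ℝ := LinearPMap.mkSpanSingleton x (gauge W x) hx0 with hfp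
      have hfple : ∀ z : fp.domain, fp z ≤ gauge W z := by
        intro z
        have hz : (z : E) ∈ Submodule.span ℝ {x} := z.2
        obtain ⟨c, hc⟩ := Submodule.mem_span_singleton.1 hz
        have hmem : c • x ∈ fp.domain := by rw [hc]; exact z.2
        have happ : fp ⟨c • x, hmem⟩ = c • gauge W x :=
          LinearPMap.mkSpanSingleton'_apply x (gauge W x) _ c hmem
        have hzeq : z = ⟨c • x, hmem⟩ := Subtype.ext hc.symm
        have hzval : fp z = c * gauge W x := by
          rw [hzeq, happ, smul_eq_mul]
        calc fp z = c * gauge W x := hzval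
          _ ≤ |c| * gauge W x := by nlinarith [hg0 x, le_abs_self c]
          _ = gauge W (c • x) := (hgabs c x).symm
          _ = gauge W (z : E) := by rw [hc]
      obtain ⟨g, hg_eq, hg_le⟩ := exists_extension_of_le_sublinear fp (gauge W)
        (fun c hc y => hgsmul c hc.le y) (gauge_add_le hWconv habs) hfple
      have hgK : ⇑g ∈ K := by
        refine ⟨fun a b => g.map_add a b, fun c a => by simp, fun a => ?_⟩
        rw [abs_le]
        constructor
        · have := hg_le (-a)
          rw [g.map_neg, hgneg] at this
          linarith
        · exact hg_le a
      have hgx : g x = gauge W x := by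
        have h1 := hg_eq ⟨x, Submodule.mem_span_singleton_self x⟩
        have h2 : fp ⟨x, Submodule.mem_span_singleton_self x⟩ = gauge W x :=
          LinearPMap.mkSpanSingleton_apply ℝ ℝ hx0 (gauge W x)
        exact h1.trans h2
      calc gauge W x = g x := hgx.symm
        _ ≤ |g x| := le_abs_self _
        _ ≤ M := hM (⇑g) hgK x hx
  -- conclude absorption
  rw [absorbs_iff_norm]
  refine ⟨M + 1, fun c hc => ?_⟩
  have hc1 : (1:ℝ) ≤ ‖c‖ := by linarith
  have hc0 : c ≠ 0 := by
    intro hc'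
    rw [hc', norm_zero] at hc1
    linarith
  intro x hx
  rw [mem_smul_set_iff_inv_smul_mem₀ hc0]
  apply hWV
  show c⁻¹ • x ∈ W
  have hgx : gauge W x < ‖c‖ := lt_of_le_of_lt (hgaugeS x hx) (by linarith)
  obtain ⟨r, hr0, hrc, hxr⟩ := exists_lt_of_gauge_lt habs hgx
  obtain ⟨w, hw, hwx⟩ := hxr
  have heq : c⁻¹ • x = (c⁻¹ * algebraMap ℝ 𝕜 r) • w := by
    rw [← hwx]
    show c⁻¹ • (r • w) = (c⁻¹ * algebraMap ℝ 𝕜 r) • w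
    rw [← algebraMap_smul 𝕜 r w, smul_smul]
  rw [heq]
  refine hWbal.smul_mem ?_ hw
  have hnr : ‖algebraMap ℝ 𝕜 r‖ = r := by
    rw [show algebraMap ℝ 𝕜 r = (r : 𝕜) from rfl, RCLike.norm_ofReal, abs_of_pos hr0]
  calc ‖c⁻¹ * algebraMap ℝ 𝕜 r‖ = r / ‖c‖ := by
        rw [norm_mul, norm_inv, hnr, div_eq_inv_mul, mul_comm]
    _ ≤ 1 := (div_le_one (show (0:ℝ) < ‖c‖ by linarith)).2 hrc.le

open Set in
/-- A Hausdorff locally convex space `E` possesses the bounded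
approximation property if and only if there exists a net of finite-rank operators on
`E` that converges to the identity operator in the strong operator topology (the
topology of pointwise convergence) and is bounded in that topology. -/
theorem statement2 :
    HasBAP 𝕜 E ↔
      ∃ (ι : Type) (lfil : Filter ι) (T : ι → E →L[𝕜] E), lfil.NeBot ∧
        (∀ ν, IsFiniteRank 𝕜 (T ν)) ∧
        (∀ x : E, Filter.Tendsto (fun ν => T ν x) lfil (𝓝 x)) ∧
        (∀ x : E, Bornology.IsVonNBounded 𝕜 (Set.range fun ν => T ν x)) := by
  unfold HasBAP IsFiniteRank
  constructor
  · -- hard direction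
    rintro ⟨ι, l₀, T, hne, hfr, hwconv, hwbdd⟩
    classical
    haveI := hne
    haveI : Nonempty ι := nonempty_of_neBot l₀
    haveI : ContinuousSMul ℝ E := IsScalarTower.continuousSMul 𝕜
    haveI : SMulCommClass ℝ 𝕜 E := ⟨fun r a v => by
      rw [← smul_one_smul 𝕜 r (a • v), ← smul_one_smul 𝕜 r v, smul_smul, smul_smul, mul_comm]⟩
    haveI : SMulCommClass 𝕜 ℝ E := SMulCommClass.symm ℝ 𝕜 E
    set C : Set (E →L[𝕜] E) := convexHull ℝ (Set.range T) with hCdef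
    have hTC : ∀ ν, T ν ∈ C := fun ν => subset_convexHull ℝ _ (Set.mem_range_self ν)
    -- representation of elements of C as convex combinations
    have hrep : ∀ A ∈ C, ∃ (κ : Type) (t : Finset κ) (w : κ → ℝ) (ν : κ → ι),
        (∀ i ∈ t, 0 ≤ w i) ∧ (∑ i ∈ t, w i) = 1 ∧ A = ∑ i ∈ t, w i • T (ν i) := by
      intro A hA
      rw [hCdef, convexHull_eq] at hA
      obtain ⟨κ, t, w, z, hw0, hw1, hz, hA⟩ := hA
      choose ν hν using hz
      set ν' : κ → ι := fun i => if h : i ∈ t then ν i h else Classical.arbitrary ι with hν'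
      refine ⟨κ, t, w, ν', hw0, hw1, ?_⟩
      rw [← hA, Finset.centerMass_eq_of_sum_1 _ _ hw1]
      refine Finset.sum_congr rfl fun i hi => ?_
      rw [hν']
      simp only [dif_pos hi]
      rw [hν i hi]
    -- all elements of C are finite rank
    have hfrC : ∀ A ∈ C, FiniteDimensional 𝕜 (LinearMap.range ((A : E →L[𝕜] E) : E →ₗ[𝕜] E)) := by
      intro A hA
      obtain ⟨κ, t, w, ν, hw0, hw1, rfl⟩ := hrep A hA
      haveI : ∀ i : κ, FiniteDimensional 𝕜
          (LinearMap.range ((T (ν i) : E →L[𝕜] E) : E →ₗ[𝕜] E)) := fun i => hfr (ν i)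
      haveI : FiniteDimensional 𝕜
          ((t.sup fun i => LinearMap.range ((T (ν i) : E →L[𝕜] E) : E →ₗ[𝕜] E) :
            Submodule 𝕜 E) : Type) :=
        Submodule.finiteDimensional_finset_sup _ _
      refine Submodule.finiteDimensional_of_le (S₂ :=
        t.sup fun i => LinearMap.range ((T (ν i) : E →L[𝕜] E) : E →ₗ[𝕜] E)) ?_
      rintro y ⟨v, rfl⟩
      simp only [ContinuousLinearMap.coe_coe, ContinuousLinearMap.sum_apply,
        ContinuousLinearMap.smul_apply]
      refine Submodule.sum_mem _ fun i hi => ?_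
      refine Submodule.smul_of_tower_mem _ _ ?_
      exact (Finset.le_sup (f := fun i => LinearMap.range ((T (ν i) : E →L[𝕜] E) : E →ₗ[𝕜] E)) hi)
        (LinearMap.mem_range_self _ v)
    -- evaluations of C are weakly bounded, hence bounded (Mackey)
    have hbddC : ∀ x : E, Bornology.IsVonNBounded 𝕜 ((fun A : E →L[𝕜] E => A x) '' C) := by
      intro x
      apply mackey_bounded
      intro f
      obtain ⟨C₀, hC₀⟩ := hwbdd x f
      have hC₀' : ∀ ν, ‖f (T ν x)‖ ≤ max C₀ 0 := fun ν => (hC₀ ν).trans (le_max_left _ _)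
      refine ⟨max C₀ 0, ?_⟩
      rintro - ⟨A, hA, rfl⟩
      obtain ⟨κ, t, w, ν, hw0, hw1, rfl⟩ := hrep A hA
      have hApp : (∑ i ∈ t, w i • T (ν i)) x = ∑ i ∈ t, w i • T (ν i) x := by
        simp [ContinuousLinearMap.sum_apply, ContinuousLinearMap.smul_apply]
      show ‖f ((∑ i ∈ t, w i • T (ν i)) x)‖ ≤ max C₀ 0
      rw [hApp, map_sum]
      calc ‖∑ i ∈ t, f (w i • T (ν i) x)‖ ≤ ∑ i ∈ t, ‖f (w i • T (ν i) x)‖ :=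
            norm_sum_le _ _
        _ ≤ ∑ i ∈ t, w i * max C₀ 0 := by
            refine Finset.sum_le_sum fun i hi => ?_
            rw [f.map_smul_of_tower, norm_smul, Real.norm_eq_abs, abs_of_nonneg (hw0 i hi)]
            exact mul_le_mul_of_nonneg_left (hC₀' (ν i)) (hw0 i hi)
        _ = max C₀ 0 := by rw [← Finset.sum_mul, hw1, one_mul]
    -- Mazur: C is pointwise dense at the identity, uniformly over finite sets
    have hdense : ∀ (s : Finset E), ∀ U ∈ 𝓝 (0 : E), ∃ A ∈ C, ∀ x ∈ s, A x - x ∈ U := by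
      intro s U hU
      set σ := {x // x ∈ s}
      set F := σ → E
      -- the evaluation linear map
      set Φ : (E →L[𝕜] E) →ₗ[ℝ] F :=
        { toFun := fun A => fun x => A x.1
          map_add' := fun A B => by funext x; rfl
          map_smul' := fun c A => by funext x; rfl } with hΦ
      set D : Set F := Φ '' C with hD
      have hDconv : Convex ℝ D := (convex_convexHull ℝ _).linear_image Φ
      set ξ : F := fun x => x.1 with hξ
      -- the dual of F separates points
      have hinj : Function.Injective ((topDualPairing 𝕜 F).flip) := by
        intro v w hvw
        by_contra hne'
        obtain ⟨f, hf⟩ := RCLike.geometric_hahn_banach_point_point (𝕜 := 𝕜) hne'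
        have : (topDualPairing 𝕜 F).flip v f = (topDualPairing 𝕜 F).flip w f := by rw [hvw]
        simp only [LinearMap.flip_apply, topDualPairing_apply] at this
        rw [this] at hf
        exact lt_irrefl _ hf
      -- single-coordinate continuous linear maps
      have hsingle_cont : ∀ j : σ, Continuous (fun v : E => Pi.single (M := fun _ : σ => E) j v) := by
        intro j
        refine continuous_pi fun i => ?_
        simp only [Pi.single_apply]
        split_ifs
        · exact continuous_id
        · exact continuous_const
      set sg : σ → E →L[𝕜] F := fun j =>
        ⟨LinearMap.single 𝕜 (fun _ : σ => E) j, hsingle_cont j⟩ with hsg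
      -- weak convergence of the net in F
      have hweak : Tendsto (fun ν => toWeakSpace 𝕜 F (Φ (T ν))) l₀
          (𝓝 (toWeakSpace 𝕜 F ξ)) := by
        refine (WeakBilin.tendsto_iff_forall_eval_tendsto (topDualPairing 𝕜 F).flip hinj).2 ?_
        intro φ
        show Tendsto (fun ν => φ (Φ (T ν))) l₀ (𝓝 (φ ξ))
        have hdecomp : ∀ g : F, φ g = ∑ j : σ, φ (sg j (g j)) := by
          intro g
          have : g = ∑ j : σ, Pi.single j (g j) := by
            funext i
            rw [Finset.sum_apply]
            simp [Finset.sum_pi_single]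
          conv_lhs => rw [this]
          rw [map_sum]
          rfl
        have h1 : ∀ g : F, φ g = ∑ j : σ, (φ.comp (sg j)) (g j) := fun g => hdecomp g
        simp only [h1]
        apply tendsto_finset_sum
        intro j _
        exact hwconv j.1 (φ.comp (sg j))
      -- the identity-evaluation is in the weak closure of D, hence in the closure of D
      have hmemcl : toWeakSpace 𝕜 F ξ ∈ closure (toWeakSpace 𝕜 F '' D) := by
        apply mem_closure_of_tendsto hweak
        filter_upwards with ν
        exact Set.mem_image_of_mem _ (Set.mem_image_of_mem _ (hTC ν))
      have hclD : ξ ∈ closure D := by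
        rw [← Convex.toWeakSpace_closure 𝕜 hDconv] at hmemcl
        obtain ⟨η, hη, hηe⟩ := hmemcl
        rwa [← (toWeakSpace 𝕜 F).injective hηe]
      -- a product neighborhood of ξ
      have hN : (Set.univ : Set σ).pi (fun j => {y : E | y - ξ j ∈ U}) ∈ 𝓝 ξ := by
        refine set_pi_mem_nhds Set.finite_univ fun j _ => ?_
        have hcont : Continuous fun y : E => y - ξ j := continuous_id.sub continuous_const
        have : {y : E | y - ξ j ∈ U} = (fun y : E => y - ξ j) ⁻¹' U := rfl
        rw [this]
        apply hcont.continuousAt.preimage_mem_nhds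
        simpa using hU
      obtain ⟨g, hgN, hgD⟩ := mem_closure_iff_nhds.1 hclD _ hN
      obtain ⟨A, hAC, rfl⟩ := hgD
      refine ⟨A, hAC, fun x hx => ?_⟩
      have := hgN ⟨x, hx⟩ (Set.mem_univ _)
      simpa [hΦ, hξ] using this
    -- assemble the net indexed by C
    refine ⟨↥C, Filter.comap (fun A : ↥C => ((A : E →L[𝕜] E) : E → E)) (𝓝 (fun y : E => y)),
      fun A => (A : E →L[𝕜] E), ?_, fun A => hfrC A.1 A.2, ?_, ?_⟩
    · -- NeBot
      rw [Filter.comap_neBot_iff]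
      intro t ht
      rw [nhds_pi, Filter.mem_pi] at ht
      obtain ⟨I, hIfin, V, hV, hVt⟩ := ht
      have hU : ∀ i : E, ∃ Ui ∈ 𝓝 (0 : E), ∀ y : E, y - i ∈ Ui → y ∈ V i := by
        intro i
        refine ⟨(fun u : E => u + i) ⁻¹' V i, ?_, fun y hy => ?_⟩
        · apply (continuous_id.add continuous_const).continuousAt.preimage_mem_nhds
          simpa using hV i
        · have : (y - i) + i = y := by abel
          have h2 := hy
          simp only [Set.mem_preimage] at h2
          rwa [this] at h2
      choose Ui hUi hUiV using hU
      have hUmem : (⋂ i ∈ I, Ui i) ∈ 𝓝 (0 : E) := (Filter.biInter_mem hIfin).2 fun i _ => hUi i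
      obtain ⟨A, hAC, hAU⟩ := hdense hIfin.toFinset _ hUmem
      refine ⟨⟨A, hAC⟩, hVt fun i hi => ?_⟩
      apply hUiV i
      have := hAU i (hIfin.mem_toFinset.2 hi)
      exact Set.mem_iInter₂.1 this i hi
    · -- strong convergence
      intro x
      have h1 : Tendsto (fun A : ↥C => ((A : E →L[𝕜] E) : E → E)) _ (𝓝 (fun y : E => y)) :=
        tendsto_comap
      have h2 : Tendsto (fun g : E → E => g x) (𝓝 (fun y : E => y)) (𝓝 x) :=
        (continuous_apply x).tendsto _
      exact h2.comp h1
    · -- boundedness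
      intro x
      refine (hbddC x).subset ?_
      rintro - ⟨A, rfl⟩
      exact Set.mem_image_of_mem _ A.2
  · -- easy direction
    rintro ⟨ι, lfil, T, hne, hfr, hconv, hbdd⟩
    refine ⟨ι, lfil, T, hne, hfr, fun x f => (f.continuous.tendsto x).comp (hconv x), fun x f => ?_⟩
    have h1 : Bornology.IsVonNBounded 𝕜 (f '' Set.range fun ν => T ν x) := (hbdd x).image f
    obtain ⟨r, hr⟩ := (NormedSpace.isVonNBounded_iff' (𝕜 := 𝕜)).1 h1
    exact ⟨r, fun ν => hr _ (Set.mem_image_of_mem _ (Set.mem_range_self ν))⟩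
end

section
/- If the topology of a Hausdorff locally convex space E coincides with the weak topology σ(E, E'), then E possesses the approximation property. -/
/-
Setting: `E` is a Hausdorff locally convex topological vector space over `𝕜 = ℝ` or `ℂ`
(`RCLike 𝕜`), with `E' = E →L[𝕜] 𝕜` its (strong) dual.
-/

open Filter Topology Bornology

variable {𝕜 : Type} [RCLike 𝕜] {E : Type} [AddCommGroup E] [Module 𝕜 E]
  [UniformSpace E] [IsUniformAddGroup E] [ContinuousSMul 𝕜 E]
  [Module ℝ E] [IsScalarTower ℝ 𝕜 E] [LocallyConvexSpace ℝ E] [T2Space E]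

/-- If the topology of a Hausdorff locally convex space `E` coincides with
the weak topology `σ(E, E')`, then `E` possesses the approximation property. -/
theorem statement5
    (h : (inferInstance : TopologicalSpace E) =
      TopologicalSpace.induced (fun (v : E) => fun f : E →L[𝕜] 𝕜 => f v)
        Pi.topologicalSpace) :
    HasAP 𝕜 E := by
  classical
  intro A S _hS U hU
  -- rewrite the neighborhood filter via the induced topology
  have h0' := congrArg (fun t : TopologicalSpace E => @nhds E t (0 : E)) h
  beta_reduce at h0'
  rw [nhds_induced] at h0'
  rw [show (𝓝 (0 : E)) = Filter.comap (fun (v : E) => fun f : E →L[𝕜] 𝕜 => f v)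
      (𝓝 (fun f : E →L[𝕜] 𝕜 => f (0 : E))) from h0'] at hU
  obtain ⟨T, hT, hTU⟩ := Filter.mem_comap.mp hU
  rw [nhds_pi] at hT
  obtain ⟨I, hIfin, V, hV, hVT⟩ := Filter.mem_pi.mp hT
  haveI : Fintype ↥I := hIfin.fintype
  -- the evaluation map into 𝕜^I
  let p : E →ₗ[𝕜] (↥I → 𝕜) :=
    { toFun := fun v i => (i : E →L[𝕜] 𝕜) v
      map_add' := fun v w => by ext i; simp
      map_smul' := fun c v => by ext i; simp }
  have hpcont : Continuous p := continuous_pi fun i => (i : E →L[𝕜] 𝕜).continuous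
  let W : Submodule 𝕜 (↥I → 𝕜) := LinearMap.range p
  haveI : FiniteDimensional 𝕜 W := inferInstance
  let b := Module.Basis.ofVectorSpace 𝕜 W
  have hpre : ∀ w : W, ∃ x : E, p x = (w : ↥I → 𝕜) := fun w => w.2
  let s : W →ₗ[𝕜] E := b.constr 𝕜 fun j => (hpre (b j)).choose
  have hps : ∀ w : W, p (s w) = (w : ↥I → 𝕜) := by
    have key : (p ∘ₗ s) = W.subtype := b.ext fun j => by
      simp only [LinearMap.comp_apply, Submodule.subtype_apply, s, Module.Basis.constr_basis]
      exact (hpre (b j)).choose_spec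
    intro w
    exact DFunLike.congr_fun key w
  have hscont : Continuous s := s.continuous_of_finiteDimensional
  let q : E →ₗ[𝕜] W := p.codRestrict W fun x => LinearMap.mem_range_self p x
  let Flin : E →ₗ[𝕜] E := s ∘ₗ q ∘ₗ (A : E →ₗ[𝕜] E)
  have hFcont : Continuous Flin :=
    hscont.comp (Continuous.subtype_mk (hpcont.comp A.continuous) _)
  refine ⟨⟨Flin, hFcont⟩, ?_, ?_⟩
  · -- finite rank
    have hle : LinearMap.range Flin ≤ LinearMap.range s := by
      rintro _ ⟨x, rfl⟩
      exact ⟨q (A x), rfl⟩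
    exact Submodule.finiteDimensional_of_le hle
  · intro x _hx
    apply hTU
    apply hVT
    intro f hf
    have hzero : f ((A : E →ₗ[𝕜] E) x - Flin x) = 0 := by
      have h1 : f (Flin x) = p (Flin x) ⟨f, hf⟩ := rfl
      have h2 : p (Flin x) = p ((A : E →ₗ[𝕜] E) x) := hps (q ((A : E →ₗ[𝕜] E) x))
      have h3 : p ((A : E →ₗ[𝕜] E) x) ⟨f, hf⟩ = f ((A : E →ₗ[𝕜] E) x) := rfl
      have : f (Flin x) = f ((A : E →ₗ[𝕜] E) x) := by rw [h1, h2, h3]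
      rw [map_sub, this, sub_self]
    show f (A x - Flin x) ∈ V f
    have : f (A x - Flin x) = 0 := hzero
    rw [this]
    have : f (0 : E) = 0 := map_zero f
    have hVf := hV f
    rw [this] at hVf
    exact mem_of_mem_nhds hVf
end

section
/- Suppose a Hausdorff locally convex space E possesses a basis of absolutely convex neighborhoods of zero such that for every neighborhood U in this basis the associated Banach space Ê_U possesses the approximation property. Then E possesses the approximation property. -/
/-
Setting: `E` is a Hausdorff locally convex topological vector space over `𝕜 = ℝ` or `ℂ`
(`RCLike 𝕜`), with `E' = E →L[𝕜] 𝕜` its (strong) dual.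
-/

open Filter Topology Bornology

variable {𝕜 : Type} [RCLike 𝕜] {E : Type} [AddCommGroup E] [Module 𝕜 E]
  [UniformSpace E] [IsUniformAddGroup E] [ContinuousSMul 𝕜 E]
  [Module ℝ E] [IsScalarTower ℝ 𝕜 E] [LocallyConvexSpace ℝ E] [T2Space E]

section AuxGauge

variable {𝕜 : Type} [RCLike 𝕜] {E : Type} [AddCommGroup E] [Module 𝕜 E]

/-- Type synonym of `E` equipped with the seminormed structure given by `p`. -/
def GaugeSp (E : Type) {𝕜 : Type} [RCLike 𝕜] [AddCommGroup E] [Module 𝕜 E]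
    (_p : Seminorm 𝕜 E) : Type := E

instance (p : Seminorm 𝕜 E) : SeminormedAddCommGroup (GaugeSp E p) :=
  p.toAddGroupSeminorm.toSeminormedAddCommGroup

instance (p : Seminorm 𝕜 E) : Module 𝕜 (GaugeSp E p) :=
  inferInstanceAs (Module 𝕜 E)

lemma norm_gaugeSp (p : Seminorm 𝕜 E) (v : GaugeSp E p) : ‖v‖ = p v := rfl

instance (p : Seminorm 𝕜 E) : NormedSpace 𝕜 (GaugeSp E p) where
  norm_smul_le c x := by
    change p (c • x) ≤ ‖c‖ * p x
    exact (map_smul_eq_mul p c (show E from x)).le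

end AuxGauge

section AuxKey

open Pointwise

variable {𝕜 : Type} [RCLike 𝕜] {E : Type} [AddCommGroup E] [Module 𝕜 E]
  [UniformSpace E] [IsUniformAddGroup E] [ContinuousSMul 𝕜 E]
  [Module ℝ E] [IsScalarTower ℝ 𝕜 E] [T2Space E]

/-- Key step: approximate the identity on a totally bounded set by a finite-rank
operator, up to the absolutely convex neighborhood `W`. -/
theorem key_approx {W : Set E} (hW : W ∈ 𝓝 (0 : E)) (hbal : Balanced 𝕜 W)
    (hconv : Convex ℝ W)
    (hAP : ∀ (F : Type) [NormedAddCommGroup F] [NormedSpace 𝕜 F] [CompleteSpace F],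
        ∀ π : E →ₗ[𝕜] F, (∀ v : E, ‖π v‖ = gauge W v) → DenseRange (fun v => π v) →
          HasAP 𝕜 F)
    (S : Set E) (hS : TotallyBounded S) :
    ∃ T : E →L[𝕜] E, IsFiniteRank 𝕜 T ∧ ∀ x ∈ S, x - T x ∈ W := by
  classical
  -- absorbency over `ℝ`
  have habs𝕜 : Absorbent 𝕜 W := absorbent_nhds_zero hW
  have habsℝ : Absorbent ℝ W := by
    intro x
    obtain ⟨r, hr⟩ := absorbs_iff_norm.1 (habs𝕜 x)
    refine absorbs_iff_norm.2 ⟨r, fun a ha => ?_⟩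
    have hnorm : ‖(a : 𝕜)‖ = ‖a‖ := by
      rw [RCLike.norm_ofReal, Real.norm_eq_abs]
    have h1 : {x} ⊆ (a : 𝕜) • W := hr (a : 𝕜) (by rw [hnorm]; exact ha)
    have h2 : a • W = (a : 𝕜) • W := by
      ext y
      simp only [Set.mem_smul_set]
      exact exists_congr fun w => and_congr_right fun _ => by
        rw [RCLike.real_smul_eq_coe_smul (K := 𝕜)]
    rw [h2]; exact h1
  set p : Seminorm 𝕜 E := gaugeSeminorm hbal hconv habsℝ with hp
  have hp_eq : ∀ v : E, p v = gauge W v := fun v => gaugeSeminorm_toFun hbal hconv habsℝ v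
  -- the seminorm `p` is continuous on `E`
  have hpcont : Continuous p := by
    refine Seminorm.continuous (r := 2) ?_
    rw [Seminorm.ball_zero_eq]
    refine Filter.mem_of_superset hW fun v hv => ?_
    have : p v ≤ 1 := by rw [hp_eq]; exact gauge_le_one_of_mem hv
    exact lt_of_le_of_lt this one_lt_two
  have hball : ∀ ε : ℝ, 0 < ε → {v : E | p v < ε} ∈ 𝓝 (0 : E) := by
    intro ε hε
    have hopen : IsOpen {v : E | p v < ε} := isOpen_lt hpcont continuous_const
    refine hopen.mem_nhds ?_
    simp only [Set.mem_setOf_eq, map_zero]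
    exact hε
  -- the Banach space `F`
  set F := UniformSpace.Completion (GaugeSp E p) with hF
  let π : E →ₗ[𝕜] F :=
    { toFun := fun v => UniformSpace.Completion.coe' (α := GaugeSp E p) v
      map_add' := fun u v => UniformSpace.Completion.coe_add (α := GaugeSp E p) u v
      map_smul' := fun c v => UniformSpace.Completion.coe_smul (X := GaugeSp E p) c v }
  have hπnorm : ∀ v : E, ‖π v‖ = gauge W v := by
    intro v
    rw [← hp_eq]
    exact UniformSpace.Completion.norm_coe (E := GaugeSp E p) v
  have hπnormp : ∀ v : E, ‖π v‖ = p v := fun v => by rw [hπnorm, hp_eq]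
  -- `π` is uniformly continuous
  have hπtend : Filter.Tendsto π (𝓝 (0 : E)) (𝓝 (0 : F)) := by
    rw [NormedAddCommGroup.tendsto_nhds_zero]
    intro ε hε
    refine Filter.mem_of_superset (hball ε hε) fun v hv => ?_
    show ‖π v‖ < ε
    rw [hπnormp]; exact hv
  have hπuc : UniformContinuous π := uniformContinuous_of_tendsto_zero hπtend
  have hπcont : Continuous π := hπuc.continuous
  let πL : E →L[𝕜] F := ⟨π, hπcont⟩
  have hdense : DenseRange (fun v : E => π v) :=
    UniformSpace.Completion.denseRange_coe (α := GaugeSp E p)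
  -- apply the approximation property of `F`
  have hAPF : HasAP 𝕜 F := hAP F π hπnorm hdense
  have hTBπ : TotallyBounded (π '' S) := hS.image hπuc
  obtain ⟨G, hGfin, hG⟩ := hAPF (ContinuousLinearMap.id 𝕜 F) (π '' S) hTBπ
    (Metric.ball 0 2⁻¹) (Metric.ball_mem_nhds 0 (by norm_num))
  -- decompose `G` using a basis of its finite-dimensional range
  set R := LinearMap.range (G : F →ₗ[𝕜] F) with hR
  haveI hRfin : FiniteDimensional 𝕜 R := hGfin
  set n := Module.finrank 𝕜 R with hn
  set b : Module.Basis (Fin n) 𝕜 R := Module.finBasis 𝕜 R with hb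
  let g : F →ₗ[𝕜] R := (G : F →ₗ[𝕜] F).codRestrict R fun y => LinearMap.mem_range_self _ y
  have hgcont : Continuous g := Continuous.subtype_mk G.continuous _
  let ci : Fin n → (F →L[𝕜] 𝕜) := fun i =>
    ⟨(b.coord i).comp g, ((b.coord i).continuous_of_finiteDimensional).comp hgcont⟩
  have hsum : ∀ y : F, G y = ∑ i, ci i y • (b i : F) := by
    intro y
    have h1 : ((g y : R) : F) = G y := rfl
    have h2 : (∑ i, b.repr (g y) i • b i) = g y := b.sum_repr (g y)
    calc G y = ((g y : R) : F) := rfl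
      _ = ((∑ i, b.repr (g y) i • b i : R) : F) := by rw [h2]
      _ = ∑ i, b.repr (g y) i • ((b i : R) : F) := by push_cast; rfl
      _ = ∑ i, ci i y • (b i : F) := by rfl
  -- bound on `π '' S`
  obtain ⟨M0, hM0⟩ := isBounded_iff_forall_norm_le.1 hTBπ.isBounded
  set M := max M0 0 with hM
  have hMnn : 0 ≤ M := le_max_right _ _
  have hMb : ∀ y ∈ π '' S, ‖y‖ ≤ M := fun y hy => (hM0 y hy).trans (le_max_left _ _)
  -- choose approximations of the basis vectors in the range of `π`
  have hδpos : ∀ i : Fin n, (0 : ℝ) < 2⁻¹ / (n + 1) / (‖ci i‖ * M + 1) := by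
    intro i
    have h1 : (0:ℝ) < 2⁻¹ / (n + 1) := by positivity
    have h2 : (0:ℝ) < ‖ci i‖ * M + 1 := by positivity
    positivity
  have he : ∀ i : Fin n, ∃ v : E,
      dist ((b i : R) : F) (π v) < 2⁻¹ / (n + 1) / (‖ci i‖ * M + 1) := fun i =>
    hdense.exists_dist_lt ((b i : R) : F) (hδpos i)
  choose e he using he
  -- the finite-rank operator
  let T : E →L[𝕜] E := ∑ i, ((ci i).comp πL).smulRight (e i)
  have hTapp : ∀ x : E, T x = ∑ i, ci i (π x) • e i := by
    intro x
    simp only [T, ContinuousLinearMap.sum_apply, ContinuousLinearMap.smulRight_apply,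
      ContinuousLinearMap.comp_apply]
    rfl
  refine ⟨T, ?_, ?_⟩
  · -- finite rank
    haveI : FiniteDimensional 𝕜 (Submodule.span 𝕜 (Set.range e)) :=
      FiniteDimensional.span_of_finite 𝕜 (Set.finite_range e)
    refine Submodule.finiteDimensional_of_le (S₂ := Submodule.span 𝕜 (Set.range e)) ?_
    rintro _ ⟨x, rfl⟩
    rw [show (T : E →ₗ[𝕜] E) x = T x from rfl, hTapp]
    exact Submodule.sum_mem _ fun i _ =>
      Submodule.smul_mem _ _ (Submodule.subset_span ⟨i, rfl⟩)
  · -- approximation on `S`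
    intro x hx
    have h1 : ‖π x - G (π x)‖ < 2⁻¹ := by
      have := hG (π x) ⟨x, hx, rfl⟩
      simpa [Metric.mem_ball, dist_eq_norm] using this
    have hπT : π (T x) = ∑ i, ci i (π x) • π (e i) := by
      rw [hTapp, map_sum]
      simp only [map_smul]
    have h2 : ‖G (π x) - π (T x)‖ ≤ n * (2⁻¹ / (n + 1)) := by
      rw [hπT, hsum (π x), ← Finset.sum_sub_distrib]
      have : ∀ i ∈ Finset.univ (α := Fin n),
          ‖ci i (π x) • (b i : F) - ci i (π x) • π (e i)‖ ≤ 2⁻¹ / ((n : ℝ) + 1) := by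
        intro i _
        rw [← smul_sub, norm_smul]
        have hb1 : ‖ci i (π x)‖ ≤ ‖ci i‖ * M := by
          calc ‖ci i (π x)‖ ≤ ‖ci i‖ * ‖π x‖ := (ci i).le_opNorm _
            _ ≤ ‖ci i‖ * M := by
              exact mul_le_mul_of_nonneg_left (hMb _ ⟨x, hx, rfl⟩) (norm_nonneg _)
        have hb2 : ‖(b i : F) - π (e i)‖ ≤ 2⁻¹ / (n + 1) / (‖ci i‖ * M + 1) := by
          have := he i
          rw [dist_eq_norm] at this
          exact this.le
        calc ‖ci i (π x)‖ * ‖(b i : F) - π (e i)‖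
            ≤ (‖ci i‖ * M + 1) * (2⁻¹ / (n + 1) / (‖ci i‖ * M + 1)) := by
              refine mul_le_mul (hb1.trans (by linarith)) hb2 (norm_nonneg _) ?_
              positivity
          _ = 2⁻¹ / ((n : ℝ) + 1) := by
              field_simp
      calc ‖∑ i, (ci i (π x) • (b i : F) - ci i (π x) • π (e i))‖
          ≤ ∑ i, ‖ci i (π x) • (b i : F) - ci i (π x) • π (e i)‖ :=
            norm_sum_le _ _
        _ ≤ ∑ _i : Fin n, (2⁻¹ / ((n : ℝ) + 1)) := Finset.sum_le_sum this
        _ = n * (2⁻¹ / ((n : ℝ) + 1)) := by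
            rw [Finset.sum_const, Finset.card_univ, Fintype.card_fin, nsmul_eq_mul]
    have h3 : ‖π x - π (T x)‖ < 1 := by
      have hle : (n : ℝ) * (2⁻¹ / (n + 1)) ≤ 2⁻¹ := by
        rw [mul_div_assoc']
        rw [div_le_iff₀ (by positivity)]
        push_cast
        nlinarith [Nat.cast_nonneg (α := ℝ) n]
      calc ‖π x - π (T x)‖ ≤ ‖π x - G (π x)‖ + ‖G (π x) - π (T x)‖ := by
            have := norm_sub_le_norm_sub_add_norm_sub (π x) (G (π x)) (π (T x))
            exact this
        _ < 2⁻¹ + 2⁻¹ := by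
            have h2' := h2.trans hle
            linarith
        _ = 1 := by norm_num
    have h4 : gauge W (x - T x) < 1 := by
      rw [← hπnorm, map_sub]
      exact h3
    exact gauge_lt_one_subset_self hconv (mem_of_mem_nhds hW) habsℝ h4

end AuxKey

/-- Suppose a Hausdorff locally convex space `E` possesses a basis of
absolutely convex neighborhoods of zero such that for every neighborhood `U` in this
basis, the associated Banach space `Ê_U` (the completion of the quotient of `E` by the
null space of the gauge `p_U`, normed by `p_U`; characterized up to isometry as a
Banach space `F` with a linear map `π : E → F` of dense range with `‖π x‖ = p_U x`)
possesses the approximation property. Then `E` possesses the approximation property. -/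
theorem statement6
    (h : ∃ 𝓑 : Set (Set E),
      (∀ U ∈ 𝓑, U ∈ 𝓝 (0 : E) ∧ Balanced 𝕜 U ∧ Convex ℝ U) ∧
      (∀ V ∈ 𝓝 (0 : E), ∃ U ∈ 𝓑, U ⊆ V) ∧
      (∀ U ∈ 𝓑, ∀ (F : Type) [NormedAddCommGroup F] [NormedSpace 𝕜 F] [CompleteSpace F],
        ∀ π : E →ₗ[𝕜] F, (∀ v : E, ‖π v‖ = gauge U v) → DenseRange (fun v => π v) →
          HasAP 𝕜 F)) :
    HasAP 𝕜 E := by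
  intro A S hS U hU
  obtain ⟨𝓑, h1, h2, h3⟩ := h
  have hV : A ⁻¹' U ∈ 𝓝 (0 : E) := by
    have hA := A.continuous.continuousAt (x := (0 : E))
    rw [ContinuousAt, map_zero] at hA
    exact hA hU
  obtain ⟨W, hW𝓑, hWV⟩ := h2 _ hV
  obtain ⟨hWnhds, hbal, hconv⟩ := h1 W hW𝓑
  obtain ⟨T, hTfin, hT⟩ := key_approx hWnhds hbal hconv (h3 W hW𝓑) S hS
  refine ⟨A.comp T, ?_, ?_⟩
  · have hco : ((A.comp T : E →L[𝕜] E) : E →ₗ[𝕜] E)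
        = (A : E →ₗ[𝕜] E).comp (T : E →ₗ[𝕜] E) := rfl
    unfold IsFiniteRank
    rw [hco, LinearMap.range_comp]
    haveI : FiniteDimensional 𝕜 (LinearMap.range (T : E →ₗ[𝕜] E)) := hTfin
    exact Module.Finite.map _ _
  · intro x hx
    have hmem : x - T x ∈ A ⁻¹' U := hWV (hT x hx)
    have : A x - (A.comp T) x = A (x - T x) := by
      rw [ContinuousLinearMap.comp_apply, ← map_sub]
    rw [this]
    exact hmem
end

section
/- Let A be a Fredholm operator on E given by A x = ∑_{i=1}^∞ λ_i ⟨x'_i, x⟩ x_i, where ∑|λ_i| < ∞ and the sequences {x_i} ⊂ E and {x'_i} ⊂ E' are bounded, and let F be a finite-rank operator on E given by F x = ∑_{j=1}^m ⟨y'_j, x⟩ y_j with y_j ∈ E, y'_j ∈ E'. Then the series ∑_{i=1}^∞ λ_i ⟨x'_i, F x_i⟩ converges absolutely and its sum equals ∑_{j=1}^m ⟨y'_j, A y_j⟩, which is the ordinary trace sp(F∘A) of the finite-rank operator F∘A. -/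
/-
Setting: `E` is a Hausdorff locally convex topological vector space over `𝕜 = ℝ` or `ℂ`
(`RCLike 𝕜`), with `E' = E →L[𝕜] 𝕜` its (strong) dual.
-/

open Filter Topology Bornology

variable {𝕜 : Type} [RCLike 𝕜] {E : Type} [AddCommGroup E] [Module 𝕜 E]
  [UniformSpace E] [IsUniformAddGroup E] [ContinuousSMul 𝕜 E]
  [Module ℝ E] [IsScalarTower ℝ 𝕜 E] [LocallyConvexSpace ℝ E] [T2Space E]

/-- Let `A` be a Fredholm operator on `E` given by
`A x = ∑_{i=1}^∞ λ_i ⟨x'_i, x⟩ x_i`, where `∑ |λ_i| < ∞` and the sequences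
`{x_i} ⊆ E`, `{x'_i} ⊆ E'` are bounded, and let `F` be the finite-rank operator
`F x = ∑_{j=1}^m ⟨y'_j, x⟩ y_j`. Then the series `∑_{i=1}^∞ λ_i ⟨x'_i, F x_i⟩`
converges absolutely and its sum equals `∑_{j=1}^m ⟨y'_j, A y_j⟩`, which is the
ordinary trace `sp (F ∘ A)` of the finite-rank operator `F ∘ A`. -/
theorem statement7
    (l : ℕ → 𝕜) (hl : Summable fun i => ‖l i‖)
    (x : ℕ → E) (x' : ℕ → E →L[𝕜] 𝕜)
    (hx : Bornology.IsVonNBounded 𝕜 (Set.range x))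
    (hx' : Bornology.IsVonNBounded 𝕜 (Set.range x'))
    (A : E → E)
    (hA : ∀ v : E, Filter.Tendsto (fun n => ∑ i ∈ Finset.range n, (l i * x' i v) • x i)
      Filter.atTop (𝓝 (A v)))
    (m : ℕ) (y : Fin m → E) (y' : Fin m → E →L[𝕜] 𝕜)
    (F : E →L[𝕜] E) (hF : ∀ v : E, F v = ∑ j, (y' j v) • y j) :
    (Summable fun i => ‖l i * x' i (F (x i))‖) ∧
    (∑' i, l i * x' i (F (x i)) = ∑ j, y' j (A (y j))) ∧
    (∀ G : E →L[𝕜] E, (∀ v : E, G v = F (A v)) → sp 𝕜 G = ∑ j, y' j (A (y j))) := by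
  classical
  -- A is additive and homogeneous
  have hadd : ∀ v w, A (v + w) = A v + A w := by
    intro v w
    refine tendsto_nhds_unique (hA (v + w)) ?_
    have h := (hA v).add (hA w)
    simpa [← Finset.sum_add_distrib, map_add, mul_add, add_smul] using h
  have hsmul : ∀ (c : 𝕜) (v : E), A (c • v) = c • A v := by
    intro c v
    refine tendsto_nhds_unique (hA (c • v)) ?_
    have h := (hA v).const_smul c
    simpa [Finset.smul_sum, map_smul, smul_smul, mul_left_comm] using h
  -- uniform bounds for x' on bounded sets
  have hbnd : ∀ s : Set E, Bornology.IsVonNBounded 𝕜 s →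
      ∃ C : ℝ, ∀ i, ∀ v ∈ s, ‖x' i v‖ ≤ C := by
    intro s hs
    have h2 := ContinuousLinearMap.isVonNBounded_image2_apply hx' hs
    have h3 := (NormedSpace.isVonNBounded_iff (𝕜 := 𝕜) (E := 𝕜)).mp h2
    obtain ⟨C, hC⟩ := h3.exists_norm_le
    exact ⟨C, fun i v hv => hC _ (Set.mem_image2_of_mem (Set.mem_range_self i) hv)⟩
  obtain ⟨C, hC⟩ := hbnd (F '' Set.range x) (hx.image F)
  have hC0 : 0 ≤ C := le_trans (norm_nonneg _) (hC 0 _ ⟨x 0, Set.mem_range_self 0, rfl⟩)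
  have hsum1 : Summable fun i => ‖l i * x' i (F (x i))‖ := by
    refine Summable.of_nonneg_of_le (fun i => norm_nonneg _) (fun i => ?_) (hl.mul_right C)
    rw [norm_mul]
    exact mul_le_mul_of_nonneg_left (hC i _ ⟨x i, Set.mem_range_self i, rfl⟩) (norm_nonneg _)
  -- per-j bounds
  have hB1 : ∀ j, ∃ B : ℝ, ∀ i, ‖y' j (x i)‖ ≤ B := by
    intro j
    have h2 := (hx.image (y' j))
    have h3 := (NormedSpace.isVonNBounded_iff (𝕜 := 𝕜) (E := 𝕜)).mp h2
    obtain ⟨B, hB⟩ := h3.exists_norm_le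
    exact ⟨B, fun i => hB _ ⟨x i, Set.mem_range_self i, rfl⟩⟩
  have hB2 : ∀ j, ∃ B : ℝ, ∀ i, ‖x' i (y j)‖ ≤ B := by
    intro j
    obtain ⟨B, hB⟩ := hbnd {y j} (Bornology.isVonNBounded_singleton (y j))
    exact ⟨B, fun i => hB i _ rfl⟩
  have hsumj : ∀ j, Summable fun i => ‖l i * x' i (y j) * y' j (x i)‖ := by
    intro j
    obtain ⟨B1, hB1j⟩ := hB1 j
    obtain ⟨B2, hB2j⟩ := hB2 j
    refine Summable.of_nonneg_of_le (fun i => norm_nonneg _) (fun i => ?_)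
      ((hl.mul_right B2).mul_right B1)
    rw [norm_mul, norm_mul]
    have h1 : ‖l i‖ * ‖x' i (y j)‖ ≤ ‖l i‖ * B2 :=
      mul_le_mul_of_nonneg_left (hB2j i) (norm_nonneg _)
    exact mul_le_mul h1 (hB1j i) (norm_nonneg _)
      (mul_nonneg (norm_nonneg _) (le_trans (norm_nonneg _) (hB2j i)))
  have hsumj' : ∀ j, Summable fun i => l i * x' i (y j) * y' j (x i) :=
    fun j => (hsumj j).of_norm
  -- key pointwise identity
  have hkey : ∀ i, l i * x' i (F (x i)) = ∑ j, l i * x' i (y j) * y' j (x i) := by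
    intro i
    rw [hF, map_sum, Finset.mul_sum]
    refine Finset.sum_congr rfl fun j _ => ?_
    rw [map_smul, smul_eq_mul]
    ring
  -- the tsum over i per j equals y' j (A (y j))
  have htsumj : ∀ j, ∑' i, l i * x' i (y j) * y' j (x i) = y' j (A (y j)) := by
    intro j
    have h1 : Filter.Tendsto
        (fun n => ∑ i ∈ Finset.range n, l i * x' i (y j) * y' j (x i))
        Filter.atTop (𝓝 (y' j (A (y j)))) := by
      have h2 := ((y' j).continuous.tendsto _).comp (hA (y j))
      refine Filter.Tendsto.congr (fun n => ?_) h2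
      show y' j (∑ i ∈ Finset.range n, (l i * x' i (y j)) • x i)
          = ∑ i ∈ Finset.range n, l i * x' i (y j) * y' j (x i)
      rw [map_sum]
      refine Finset.sum_congr rfl fun i _ => ?_
      rw [map_smul, smul_eq_mul]
    exact tendsto_nhds_unique ((hsumj' j).hasSum.tendsto_sum_nat) h1
  refine ⟨hsum1, ?_, ?_⟩
  · calc ∑' i, l i * x' i (F (x i))
        = ∑' i, ∑ j, l i * x' i (y j) * y' j (x i) := by
          exact tsum_congr hkey
      _ = ∑ j, ∑' i, l i * x' i (y j) * y' j (x i) :=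
          Summable.tsum_finsetSum (fun j _ => hsumj' j)
      _ = ∑ j, y' j (A (y j)) := Finset.sum_congr rfl fun j _ => htsumj j
  · intro G hG
    have hGA : ∀ v, G v = ∑ j, (y' j (A v)) • y j := fun v => by rw [hG, hF]
    let Alin : E →ₗ[𝕜] E :=
      { toFun := A, map_add' := hadd, map_smul' := hsmul }
    set W := Submodule.span 𝕜 (Set.range y) with hWdef
    have hmemW : ∀ v, G v ∈ W := fun v => by
      rw [hGA]
      exact Submodule.sum_mem _ fun j _ =>
        Submodule.smul_mem _ _ (Submodule.subset_span (Set.mem_range_self j))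
    haveI : FiniteDimensional 𝕜 W := FiniteDimensional.span_of_finite 𝕜 (Set.finite_range y)
    have hVW : LinearMap.range (G : E →ₗ[𝕜] E) ≤ W := by
      rintro _ ⟨v, rfl⟩; exact hmemW v
    haveI : FiniteDimensional 𝕜 (LinearMap.range (G : E →ₗ[𝕜] E)) :=
      Submodule.finiteDimensional_of_le hVW
    let ι : (LinearMap.range (G : E →ₗ[𝕜] E)) →ₗ[𝕜] W := Submodule.inclusion hVW
    let r : W →ₗ[𝕜] (LinearMap.range (G : E →ₗ[𝕜] E)) :=
      LinearMap.codRestrict _ ((G : E →ₗ[𝕜] E) ∘ₗ W.subtype)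
        (fun w => LinearMap.mem_range_self _ _)
    have h1 : (G : E →ₗ[𝕜] E).restrict
        (fun x _ => LinearMap.mem_range_self (G : E →ₗ[𝕜] E) x) = r ∘ₗ ι :=
      LinearMap.ext fun v => Subtype.ext rfl
    let GW : W →ₗ[𝕜] W := (G : E →ₗ[𝕜] E).restrict (fun w _ => hmemW w)
    have h2 : GW = ι ∘ₗ r := LinearMap.ext fun w => Subtype.ext rfl
    have key1 : sp 𝕜 G = LinearMap.trace 𝕜 W GW := by
      unfold sp
      rw [h1, h2, LinearMap.trace_comp_comm']
    let u : (Fin m → 𝕜) →ₗ[𝕜] E := ∑ j, LinearMap.smulRight (LinearMap.proj j) (y j)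
    have hu : ∀ c, u c = ∑ j, c j • y j := fun c => by
      simp [u, LinearMap.sum_apply]
    let u0 : (Fin m → 𝕜) →ₗ[𝕜] W := LinearMap.codRestrict W u (fun c => by
      rw [hu]
      exact Submodule.sum_mem _ fun j _ =>
        Submodule.smul_mem _ _ (Submodule.subset_span (Set.mem_range_self j)))
    let p : W →ₗ[𝕜] (Fin m → 𝕜) :=
      LinearMap.pi (fun j => ((y' j : E →ₗ[𝕜] 𝕜) ∘ₗ Alin) ∘ₗ W.subtype)
    have h3 : GW = u0 ∘ₗ p := LinearMap.ext fun w => Subtype.ext (by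
      show G (w : E) = u (p w)
      rw [hu, hGA]
      rfl)
    have key2 : LinearMap.trace 𝕜 W GW = LinearMap.trace 𝕜 (Fin m → 𝕜) (p ∘ₗ u0) := by
      rw [h3, LinearMap.trace_comp_comm']
    have key3 : LinearMap.trace 𝕜 (Fin m → 𝕜) (p ∘ₗ u0) = ∑ j, y' j (A (y j)) := by
      rw [LinearMap.trace_eq_matrix_trace 𝕜 (Pi.basisFun 𝕜 (Fin m)), Matrix.trace]
      refine Finset.sum_congr rfl fun j _ => ?_
      have hu0 : (u0 (Pi.single j 1) : E) = y j := by
        show u (Pi.single j 1) = y j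
        rw [hu]
        simp [Pi.single_apply]
      simp only [Matrix.diag, LinearMap.toMatrix_apply, Pi.basisFun_apply, Pi.basisFun_repr,
        LinearMap.comp_apply]
      show p (u0 (Pi.single j 1)) j = y' j (A (y j))
      show y' j (Alin ((u0 (Pi.single j 1) : E))) = y' j (A (y j))
      rw [hu0]
      rfl
    rw [key1, key2, key3]
end

section
/- Suppose the space E possesses the weak approximation property. Then every nuclear operator on E has a well-defined trace: if ∑_{i=1}^∞ λ_i ⟨x'_i, x⟩ x_i = ∑_{j=1}^∞ μ_j ⟨y'_j, x⟩ y_j for all x ∈ E, where both are nuclear representations, then ∑_{i=1}^∞ λ_i ⟨x'_i, x_i⟩ = ∑_{j=1}^∞ μ_j ⟨y'_j, y_j⟩. Moreover, if {B_ν} is a net of continuous operators converging to B ∈ L(E) uniformly on all absolutely convex compact subsets of E, then tr(A∘B_ν) → tr(A∘B) for every nuclear operator A on E. -/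
/-
Setting: `E` is a Hausdorff locally convex topological vector space over `𝕜 = ℝ` or `ℂ`
(`RCLike 𝕜`), with `E' = E →L[𝕜] 𝕜` its (strong) dual.
-/

open Filter Topology Bornology

open Set Pointwise

section Helpers

variable {𝕜 : Type} [RCLike 𝕜] {E : Type} [AddCommGroup E] [Module 𝕜 E]
  [UniformSpace E] [IsUniformAddGroup E] [ContinuousSMul 𝕜 E]
  [Module ℝ E] [IsScalarTower ℝ 𝕜 E] [LocallyConvexSpace ℝ E] [T2Space E]

lemma contSMulReal (𝕜 : Type) [RCLike 𝕜] {E : Type} [AddCommGroup E] [Module 𝕜 E]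
    [TopologicalSpace E] [ContinuousSMul 𝕜 E] [Module ℝ E] [IsScalarTower ℝ 𝕜 E] :
    ContinuousSMul ℝ E := by
  refine ⟨?_⟩
  have h : (fun p : ℝ × E => p.1 • p.2) = fun p : ℝ × E => (algebraMap ℝ 𝕜 p.1) • p.2 :=
    funext fun p => (algebraMap_smul 𝕜 p.1 p.2).symm
  rw [h]
  exact ((continuous_algebraMap ℝ 𝕜).comp continuous_fst).smul continuous_snd

lemma algebraMap_ne_zero' {𝕜 : Type} [RCLike 𝕜] {δ : ℝ} (hδ : 0 < δ) :
    algebraMap ℝ 𝕜 δ ≠ 0 := by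
  intro hcon
  have h2 := congrArg (fun z : 𝕜 => ‖z‖) hcon
  simp only [norm_algebraMap', norm_zero] at h2
  rw [Real.norm_of_nonneg hδ.le] at h2
  exact hδ.ne' h2

lemma exists_beta {𝕜 : Type} [RCLike 𝕜] {l : ℕ → 𝕜} (hl : Summable fun i => ‖l i‖) :
    ∃ β : ℕ → ℝ, (∀ i, 0 < β i) ∧ (∀ i, β i ≤ 1) ∧ Tendsto β atTop (𝓝 0) ∧
      Summable fun i => ‖l i‖ / β i := by
  set r : ℕ → ℝ := fun i => ∑' k, ‖l (k + i)‖ with hrdef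
  have hsum : ∀ i, Summable fun k => ‖l (k + i)‖ := fun i => (summable_nat_add_iff i).2 hl
  have hr0 : ∀ i, 0 ≤ r i := fun i => tsum_nonneg fun k => norm_nonneg _
  have hrec : ∀ i, r i = ‖l i‖ + r (i + 1) := by
    intro i
    have h1 := Summable.sum_add_tsum_nat_add (f := fun k => ‖l (k + i)‖) 1 (hsum i)
    have h2 : ∑' j, ‖l (j + 1 + i)‖ = r (i + 1) := tsum_congr fun j => by
      rw [show j + 1 + i = j + (i + 1) by omega]
    rw [Finset.sum_range_one] at h1
    rw [h2] at h1
    simp only [Nat.zero_add] at h1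
    linarith [h1]
  have hrmono : ∀ i, r (i + 1) ≤ r i := fun i => by
    have h := hrec i; have := norm_nonneg (l i); linarith
  have hrt : Tendsto r atTop (𝓝 0) := tendsto_sum_nat_add fun k => ‖l k‖
  set M : ℕ → ℝ := fun i => max (Real.sqrt (r i)) (1 / ((i : ℝ) + 1)) with hMdef
  have hM0 : ∀ i, 0 < M i := fun i =>
    lt_of_lt_of_le (by positivity) (le_max_right _ _)
  set β : ℕ → ℝ := fun i => min 1 (M i) with hβdef
  have hβpos : ∀ i, 0 < β i := fun i => lt_min one_pos (hM0 i)
  have hβle : ∀ i, β i ≤ 1 := fun i => min_le_left _ _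
  have hβ0 : Tendsto β atTop (𝓝 0) := by
    have h1 : Tendsto (fun i : ℕ => Real.sqrt (r i)) atTop (𝓝 0) := by
      have := (Real.continuous_sqrt.tendsto 0).comp hrt
      simpa [Function.comp_def] using this
    have h2 : Tendsto (fun i : ℕ => 1 / ((i : ℝ) + 1)) atTop (𝓝 0) :=
      tendsto_one_div_add_atTop_nhds_zero_nat
    have h3 := h1.max h2
    rw [max_self] at h3
    exact squeeze_zero (fun i => (hβpos i).le) (fun i => min_le_right _ _) h3
  have hsq : ∀ i, Real.sqrt (r (i + 1)) ≤ Real.sqrt (r i) := fun i =>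
    Real.sqrt_le_sqrt (hrmono i)
  set g : ℕ → ℝ := fun i => ‖l i‖ + 2 * (Real.sqrt (r i) - Real.sqrt (r (i + 1))) with hgdef
  have hg0 : ∀ i, 0 ≤ g i := fun i =>
    add_nonneg (norm_nonneg _) (by have := hsq i; linarith)
  have htel : Summable fun i => Real.sqrt (r i) - Real.sqrt (r (i + 1)) := by
    apply summable_of_sum_range_le (c := Real.sqrt (r 0))
    · intro i; have := hsq i; linarith
    · intro n
      rw [Finset.sum_range_sub' fun i => Real.sqrt (r i)]
      have := Real.sqrt_nonneg (r n); linarith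
  have hgsum : Summable g := hl.add (htel.mul_left 2)
  have hls : ∀ i, ‖l i‖ = r i - r (i + 1) := fun i => by have := hrec i; linarith
  have hbound : ∀ i, ‖l i‖ / β i ≤ g i := by
    intro i
    have step1 : ‖l i‖ / β i ≤ ‖l i‖ + ‖l i‖ / M i := by
      rcases min_cases 1 (M i) with ⟨hmin, _⟩ | ⟨hmin, _⟩
      · rw [show β i = 1 from hmin, div_one]
        have : 0 ≤ ‖l i‖ / M i := div_nonneg (norm_nonneg _) (hM0 i).le
        linarith
      · rw [show β i = M i from hmin]
        have : 0 ≤ ‖l i‖ := norm_nonneg _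
        linarith
    rcases eq_or_lt_of_le (Real.sqrt_nonneg (r i)) with hsq0 | hsq0
    · have hri : r i ≤ 0 := by
        by_contra hcon; push_neg at hcon
        have := Real.sqrt_pos.2 hcon; rw [← hsq0] at this; exact lt_irrefl _ this
      have hl0 : ‖l i‖ = 0 := le_antisymm
        (by rw [hls i]; have := hr0 (i + 1); linarith) (norm_nonneg _)
      have : ‖l i‖ / β i = 0 := by rw [hl0, zero_div]
      rw [this]; exact hg0 i
    · have step2 : ‖l i‖ / M i ≤ ‖l i‖ / Real.sqrt (r i) :=
        div_le_div_of_nonneg_left (norm_nonneg _) hsq0 (le_max_left _ _)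
      have step3 : ‖l i‖ / Real.sqrt (r i) ≤ 2 * (Real.sqrt (r i) - Real.sqrt (r (i + 1))) := by
        rw [div_le_iff₀ hsq0]
        have ha2 : Real.sqrt (r i) ^ 2 = r i := Real.sq_sqrt (hr0 i)
        have hb2 : Real.sqrt (r (i + 1)) ^ 2 = r (i + 1) := Real.sq_sqrt (hr0 (i + 1))
        have hb0 := Real.sqrt_nonneg (r (i + 1))
        nlinarith [sq_nonneg (Real.sqrt (r i) - Real.sqrt (r (i + 1))), hls i, hsq i]
      have : g i = ‖l i‖ + 2 * (Real.sqrt (r i) - Real.sqrt (r (i + 1))) := rfl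
      rw [this]; linarith
  refine ⟨β, hβpos, hβle, hβ0, ?_⟩
  exact Summable.of_nonneg_of_le
    (fun i => div_nonneg (norm_nonneg _) (hβpos i).le) hbound hgsum

end Helpers

section Helpers2

variable {𝕜 : Type} [RCLike 𝕜] {E : Type} [AddCommGroup E] [Module 𝕜 E]
  [UniformSpace E] [IsUniformAddGroup E] [ContinuousSMul 𝕜 E]
  [Module ℝ E] [IsScalarTower ℝ 𝕜 E] [LocallyConvexSpace ℝ E] [T2Space E]

lemma summable_mul_bound {l : ℕ → 𝕜} (hl : Summable fun i => ‖l i‖) {c : ℕ → 𝕜} {t : ℝ}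
    (hc : ∀ i, ‖c i‖ ≤ t) : Summable fun i => l i * c i := by
  apply Summable.of_norm
  apply Summable.of_nonneg_of_le (fun i => norm_nonneg _) (fun i => ?_) (hl.mul_right t)
  rw [norm_mul]
  exact mul_le_mul_of_nonneg_left (hc i) (norm_nonneg _)

lemma tsum_mul_bound {l : ℕ → 𝕜} {c : ℕ → 𝕜} {β : ℕ → ℝ} {δ : ℝ}
    (hδ : 0 ≤ δ) (hsum : Summable fun i => ‖l i‖ / β i)
    (hc : ∀ i, ‖c i‖ ≤ δ / β i) :
    (Summable fun i => l i * c i) ∧ ‖∑' i, l i * c i‖ ≤ δ * ∑' i, ‖l i‖ / β i := by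
  have hb : ∀ i, ‖l i * c i‖ ≤ δ * (‖l i‖ / β i) := by
    intro i
    rw [norm_mul]
    calc ‖l i‖ * ‖c i‖ ≤ ‖l i‖ * (δ / β i) := mul_le_mul_of_nonneg_left (hc i) (norm_nonneg _)
      _ = δ * (‖l i‖ / β i) := by ring
  have hns : Summable fun i => ‖l i * c i‖ :=
    Summable.of_nonneg_of_le (fun i => norm_nonneg _) hb (hsum.mul_left δ)
  refine ⟨Summable.of_norm hns, ?_⟩
  calc ‖∑' i, l i * c i‖ ≤ ∑' i, ‖l i * c i‖ := norm_tsum_le_tsum_norm hns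
    _ ≤ ∑' i, δ * (‖l i‖ / β i) := Summable.tsum_le_tsum hb hns (hsum.mul_left δ)
    _ = δ * ∑' i, ‖l i‖ / β i := tsum_mul_left

lemma bound_on_bounded {x' : ℕ → E →L[𝕜] 𝕜} {U : Set E} (hU : U ∈ 𝓝 (0 : E))
    (hUb : ∀ i, ∀ v ∈ U, ‖x' i v‖ ≤ 1) {S : Set E} (hS : IsVonNBounded 𝕜 S) :
    ∃ t : ℝ, 0 ≤ t ∧ ∀ i, ∀ w ∈ S, ‖x' i w‖ ≤ t := by
  obtain ⟨r, hr⟩ := absorbs_iff_norm.1 (hS hU)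
  obtain ⟨c, hc⟩ := NormedField.exists_lt_norm 𝕜 (max r 0)
  have hcn : r ≤ ‖c‖ := le_of_lt (lt_of_le_of_lt (le_max_left _ _) hc)
  have hcpos : (0 : ℝ) < ‖c‖ := lt_of_le_of_lt (le_max_right r 0) hc
  have hc0 : c ≠ 0 := by simpa [norm_pos_iff] using hcpos
  refine ⟨‖c‖, norm_nonneg _, fun i w hw => ?_⟩
  have hw' := hr c hcn hw
  rw [mem_smul_set_iff_inv_smul_mem₀ hc0] at hw'
  have hb := hUb i _ hw'
  have hxw : x' i w = c * x' i (c⁻¹ • w) := by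
    rw [map_smul, smul_eq_mul, ← mul_assoc, mul_inv_cancel₀ hc0, one_mul]
  rw [hxw, norm_mul]
  calc ‖c‖ * ‖x' i (c⁻¹ • w)‖ ≤ ‖c‖ * 1 := mul_le_mul_of_nonneg_left hb (norm_nonneg _)
    _ = ‖c‖ := mul_one _

lemma norm_le_of_mem_smul {g : E →L[𝕜] 𝕜} {U : Set E} (hg : ∀ v ∈ U, ‖g v‖ ≤ 1)
    {δ : ℝ} (hδ : 0 ≤ δ) {w : E} (hw : w ∈ (algebraMap ℝ 𝕜 δ) • U) : ‖g w‖ ≤ δ := by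
  obtain ⟨u, hu, rfl⟩ := hw
  rw [map_smul, smul_eq_mul, norm_mul, norm_algebraMap', Real.norm_of_nonneg hδ]
  calc δ * ‖g u‖ ≤ δ * 1 := mul_le_mul_of_nonneg_left (hg u hu) hδ
    _ = δ := mul_one δ

lemma tendsto_smul_zero {B₀ : Set E} (hB : IsVonNBounded 𝕜 B₀) {x : ℕ → E}
    (hx : ∀ i, x i ∈ B₀) {β : ℕ → ℝ} (hβ : ∀ i, 0 < β i)
    (hβ0 : Tendsto β atTop (𝓝 0)) :
    Tendsto (fun i => β i • x i) atTop (𝓝 (0 : E)) := by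
  rw [Filter.tendsto_def]
  intro V hV
  obtain ⟨r, hr⟩ := absorbs_iff_norm.1 (hB hV)
  have hmax : (0 : ℝ) < max r 1 := lt_of_lt_of_le one_pos (le_max_right r 1)
  have hev : ∀ᶠ i in atTop, β i < 1 / max r 1 :=
    hβ0.eventually_lt_const (by positivity)
  filter_upwards [hev] with i hi
  have hβi := hβ i
  have h1 : β i * max r 1 < 1 := (lt_div_iff₀ hmax).1 hi
  have hinv : max r 1 < (β i)⁻¹ := by
    have h2 : max r 1 = (β i)⁻¹ * (β i * max r 1) := by field_simp
    calc max r 1 = (β i)⁻¹ * (β i * max r 1) := h2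
      _ < (β i)⁻¹ * 1 := by
          exact mul_lt_mul_of_pos_left h1 (inv_pos.2 hβi)
      _ = (β i)⁻¹ := mul_one _
  set c : 𝕜 := algebraMap ℝ 𝕜 ((β i)⁻¹) with hcdef
  have hcn : ‖c‖ = (β i)⁻¹ := by
    rw [hcdef, norm_algebraMap', Real.norm_of_nonneg (inv_pos.2 hβi).le]
  have hrc : r ≤ ‖c‖ := by
    rw [hcn]; exact le_of_lt (lt_of_le_of_lt (le_max_left r 1) hinv)
  have hc0 : c ≠ 0 := by
    intro hcon
    rw [hcon, norm_zero] at hcn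
    exact absurd hcn.symm (ne_of_gt (inv_pos.2 hβi))
  have hx2 : x i ∈ c • V := hr c hrc (hx i)
  rw [mem_smul_set_iff_inv_smul_mem₀ hc0] at hx2
  have hcinv : c⁻¹ = algebraMap ℝ 𝕜 (β i) := by
    rw [hcdef, ← map_inv₀, inv_inv]
  show β i • x i ∈ V
  rw [← algebraMap_smul (R := ℝ) 𝕜 (β i) (x i), ← hcinv]
  exact hx2

end Helpers2

section Helpers3

variable {𝕜 : Type} [RCLike 𝕜] {E : Type} [AddCommGroup E] [Module 𝕜 E]
  [UniformSpace E] [IsUniformAddGroup E] [ContinuousSMul 𝕜 E]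
  [Module ℝ E] [IsScalarTower ℝ 𝕜 E] [LocallyConvexSpace ℝ E] [T2Space E]

lemma contSMulReal' (𝕜 : Type) [RCLike 𝕜] {E : Type} [AddCommGroup E] [Module 𝕜 E]
    [TopologicalSpace E] [ContinuousSMul 𝕜 E] [Module ℝ E] [IsScalarTower ℝ 𝕜 E] :
    ContinuousSMul ℝ E := by
  refine ⟨?_⟩
  have h : (fun p : ℝ × E => p.1 • p.2) = fun p : ℝ × E => (algebraMap ℝ 𝕜 p.1) • p.2 :=
    funext fun p => (algebraMap_smul 𝕜 p.1 p.2).symm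
  rw [h]
  exact ((continuous_algebraMap ℝ 𝕜).comp continuous_fst).smul continuous_snd

lemma exists_compact_balanced {B₀ : Set E} (hbal : Balanced 𝕜 B₀) (hconv : Convex ℝ B₀)
    (hcomp : IsComplete B₀) {z : ℕ → E} (hz : ∀ i, z i ∈ B₀)
    (hz0 : Tendsto z atTop (𝓝 0)) :
    ∃ K : Set E, IsCompact K ∧ Balanced 𝕜 K ∧ Convex ℝ K ∧ (∀ i, z i ∈ K) ∧ (0 : E) ∈ K := by
  haveI := contSMulReal' 𝕜 (E := E)
  have h0B : (0 : E) ∈ B₀ := by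
    have := hbal.smul_mem (a := (0 : 𝕜)) (by simp) (hz 0)
    simpa using this
  set S : Set E := insert 0 (Set.range z) with hSdef
  have hScpt : IsCompact S := hz0.isCompact_insert_range
  set S2 : Set E := (fun p : 𝕜 × E => p.1 • p.2) '' (Metric.closedBall (0 : 𝕜) 1 ×ˢ S)
    with hS2def
  have hS2cpt : IsCompact S2 :=
    ((isCompact_closedBall 0 1).prod hScpt).image (continuous_fst.smul continuous_snd)
  have hS2bal : Balanced 𝕜 S2 := by
    intro a ha v hv
    obtain ⟨w, hw, rfl⟩ := Set.mem_smul_set.1 hv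
    obtain ⟨p, hp, rfl⟩ := hw
    obtain ⟨hp1, hp2⟩ := hp
    refine ⟨(a * p.1, p.2), ⟨?_, hp2⟩, by simp [mul_smul]⟩
    rw [mem_closedBall_zero_iff] at hp1 ⊢
    calc ‖a * p.1‖ = ‖a‖ * ‖p.1‖ := norm_mul _ _
      _ ≤ 1 * 1 := mul_le_mul ha hp1 (norm_nonneg _) zero_le_one
      _ = 1 := one_mul 1
  have hS2sub : S2 ⊆ B₀ := by
    rintro v ⟨p, ⟨hp1, hp2⟩, rfl⟩
    have hmem : p.2 ∈ B₀ := by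
      rcases hp2 with h | ⟨i, hi⟩
      · rw [h]; exact h0B
      · rw [← hi]; exact hz i
    exact hbal.smul_mem (by simpa [mem_closedBall_zero_iff] using hp1) hmem
  set K : Set E := closure (convexHull ℝ S2) with hKdef
  have hKsub : K ⊆ B₀ :=
    closure_minimal (convexHull_min hS2sub hconv) hcomp.isClosed
  have hKc : IsCompact K := by
    rw [isCompact_iff_totallyBounded_isComplete]
    refine ⟨(totallyBounded_convexHull.2 hS2cpt.totallyBounded).closure, ?_⟩
    intro f hf hfK
    obtain ⟨x, _, hxf⟩ := hcomp f hf (hfK.trans (Filter.principal_mono.2 hKsub))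
    refine ⟨x, ?_, hxf⟩
    haveI : f.NeBot := hf.1
    have hcl : ClusterPt x f := ClusterPt.of_le_nhds hxf
    have hx : x ∈ closure K := mem_closure_iff_clusterPt.2 (hcl.mono hfK)
    rwa [hKdef, closure_closure] at hx
  have hHbal : Balanced 𝕜 (convexHull ℝ S2) := by
    intro a ha w hw
    obtain ⟨v, hv, rfl⟩ := Set.mem_smul_set.1 hw
    have hT : Convex ℝ {u : E | a • u ∈ convexHull ℝ S2} := by
      intro u hu u' hu' s t hs ht hst
      show a • (s • u + t • u') ∈ convexHull ℝ S2
      rw [smul_add, smul_comm a s u, smul_comm a t u']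
      exact convex_convexHull ℝ S2 hu hu' hs ht hst
    exact convexHull_min (fun u hu => show a • u ∈ convexHull ℝ S2 from
      subset_convexHull ℝ S2 (hS2bal.smul_mem ha hu)) hT hv
  refine ⟨K, hKc, hHbal.closure, (convex_convexHull ℝ S2).closure, ?_, ?_⟩
  · intro i
    apply subset_closure
    apply subset_convexHull ℝ S2
    exact ⟨(1, z i), ⟨by simp, Set.mem_insert_iff.2 (Or.inr ⟨i, rfl⟩)⟩, by simp⟩
  · apply subset_closure
    apply subset_convexHull ℝ S2
    exact ⟨(1, 0), ⟨by simp, Set.mem_insert _ _⟩, by simp⟩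

lemma isCompact_convexJoin {E : Type} [AddCommGroup E] [Module ℝ E] [TopologicalSpace E]
    [IsTopologicalAddGroup E] [ContinuousSMul ℝ E] {s t : Set E} (hs : IsCompact s)
    (ht : IsCompact t) : IsCompact (convexJoin ℝ s t) := by
  have himg : convexJoin ℝ s t = (fun q : (ℝ × ℝ) × E × E => q.1.1 • q.2.1 + q.1.2 • q.2.2) ''
      ({p : ℝ × ℝ | 0 ≤ p.1 ∧ 0 ≤ p.2 ∧ p.1 + p.2 = 1} ×ˢ s ×ˢ t) := by
    ext w
    constructor
    · intro hw
      obtain ⟨a, ha, b, hb, hseg⟩ := mem_convexJoin.1 hw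
      obtain ⟨u, v, hu, hv, huv, rfl⟩ := hseg
      exact ⟨((u, v), a, b), ⟨⟨hu, hv, huv⟩, ha, hb⟩, rfl⟩
    · rintro ⟨⟨⟨u, v⟩, a, b⟩, ⟨⟨hu, hv, huv⟩, ha, hb⟩, rfl⟩
      exact mem_convexJoin.2 ⟨a, ha, b, hb, u, v, hu, hv, huv, rfl⟩
  rw [himg]
  apply IsCompact.image
  · refine IsCompact.prod ?_ (hs.prod ht)
    refine IsCompact.of_isClosed_subset
      ((isCompact_Icc (a := (0:ℝ)) (b := 1)).prod (isCompact_Icc (a := (0:ℝ)) (b := 1))) ?_ ?_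
    · exact (isClosed_le continuous_const continuous_fst).inter
        ((isClosed_le continuous_const continuous_snd).inter
          (isClosed_eq (continuous_fst.add continuous_snd) continuous_const))
    · rintro ⟨u, v⟩ ⟨hu, hv, huv⟩
      exact ⟨⟨hu, by linarith⟩, hv, by linarith⟩
  · exact (continuous_fst.fst.smul continuous_snd.fst).add
      (continuous_fst.snd.smul continuous_snd.snd)

lemma balanced_convexJoin {s t : Set E} (hs : Balanced 𝕜 s) (ht : Balanced 𝕜 t) :
    Balanced 𝕜 (convexJoin ℝ s t) := by
  intro a ha w hw
  obtain ⟨v, hv, rfl⟩ := Set.mem_smul_set.1 hw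
  obtain ⟨p, hp, q, hq, hseg⟩ := mem_convexJoin.1 hv
  obtain ⟨u, u', hu, hu', huu, rfl⟩ := hseg
  have heq : a • (u • p + u' • q) = u • (a • p) + u' • (a • q) := by
    rw [smul_add, smul_comm a u p, smul_comm a u' q]
  rw [heq]
  exact mem_convexJoin.2
    ⟨a • p, hs.smul_mem ha hp, a • q, ht.smul_mem ha hq, u, u', hu, hu', huu, rfl⟩

end Helpers3


variable {𝕜 : Type} [RCLike 𝕜] {E : Type} [AddCommGroup E] [Module 𝕜 E]
  [UniformSpace E] [IsUniformAddGroup E] [ContinuousSMul 𝕜 E]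
  [Module ℝ E] [IsScalarTower ℝ 𝕜 E] [LocallyConvexSpace ℝ E] [T2Space E]

section RepHelpers

lemma finiteRank_decomp {F : E →L[𝕜] E} (hF : IsFiniteRank 𝕜 F) :
    ∃ (n : ℕ) (zz : Fin n → E) (f : Fin n → E →L[𝕜] 𝕜), ∀ v, F v = ∑ k, f k v • zz k := by
  haveI : FiniteDimensional 𝕜 (LinearMap.range ((F : E →L[𝕜] E) : E →ₗ[𝕜] E)) := hF
  set R := LinearMap.range ((F : E →L[𝕜] E) : E →ₗ[𝕜] E) with hRdef
  set b := Module.finBasis 𝕜 R with hbdef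
  set G : E →L[𝕜] R := F.codRestrict R (fun v => LinearMap.mem_range_self _ v) with hGdef
  refine ⟨Module.finrank 𝕜 R, fun k => (b k : E),
    fun k => (LinearMap.toContinuousLinearMap ((b.coord k) : R →ₗ[𝕜] 𝕜)).comp G, fun v => ?_⟩
  have hsum := b.sum_repr (G v)
  have h1 : F v = ((G v : R) : E) := rfl
  rw [h1, ← hsum]
  rw [Submodule.coe_sum]
  apply Finset.sum_congr rfl
  intro k _
  rw [SetLike.val_smul]
  congr 1

lemma rep_summable_self {A : E → E} {l : ℕ → 𝕜} {x : ℕ → E} {x' : ℕ → E →L[𝕜] 𝕜}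
    (h : NuclearRep 𝕜 A l x x') : Summable fun i => l i * x' i (x i) := by
  obtain ⟨hl, ⟨B₀, _, _, hb3, _, hxB⟩, ⟨U, hU, hUb⟩, _⟩ := h
  obtain ⟨t, _, ht⟩ := bound_on_bounded hU hUb hb3
  exact summable_mul_bound hl fun i => ht i _ (hxB i)

lemma rep_summable_comp {A : E → E} {l : ℕ → 𝕜} {x : ℕ → E} {x' : ℕ → E →L[𝕜] 𝕜}
    (h : NuclearRep 𝕜 A l x x') (T : E →L[𝕜] E) :
    Summable fun i => l i * x' i (T (x i)) := by
  obtain ⟨hl, ⟨B₀, _, _, hb3, _, hxB⟩, ⟨U, hU, hUb⟩, _⟩ := h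
  obtain ⟨t, _, ht⟩ := bound_on_bounded hU hUb (hb3.image T)
  exact summable_mul_bound hl fun i => ht i _ (Set.mem_image_of_mem _ (hxB i))

lemma rep_trace_eq {A : E → E} {l : ℕ → 𝕜} {x : ℕ → E} {x' : ℕ → E →L[𝕜] 𝕜}
    (h : NuclearRep 𝕜 A l x x') {n : ℕ} (zz : Fin n → E) (f : Fin n → E →L[𝕜] 𝕜)
    {F : E →L[𝕜] E} (hFrep : ∀ v, F v = ∑ k, f k v • zz k) :
    ∑' i, l i * x' i (F (x i)) = ∑ k, f k (A (zz k)) := by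
  obtain ⟨hl, ⟨B₀, hb1, hb2, hb3, hb4, hxB⟩, ⟨U, hU, hUb⟩, hconv⟩ := h
  have hzt : ∀ k : Fin n, ∃ t, 0 ≤ t ∧ ∀ i, ‖x' i (zz k)‖ ≤ t := by
    intro k
    obtain ⟨t, ht0, ht⟩ := bound_on_bounded hU hUb (Bornology.isVonNBounded_singleton (zz k))
    exact ⟨t, ht0, fun i => ht i _ rfl⟩
  have hft : ∀ k : Fin n, ∃ C, 0 ≤ C ∧ ∀ i, ‖f k (x i)‖ ≤ C := by
    intro k
    have himg : IsVonNBounded 𝕜 ((f k) '' B₀) := hb3.image (f k)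
    rw [NormedSpace.isVonNBounded_iff] at himg
    obtain ⟨C, hC⟩ := (isBounded_iff_forall_norm_le).1 himg
    exact ⟨max C 0, le_max_right _ _, fun i =>
      le_trans (hC _ (Set.mem_image_of_mem _ (hxB i))) (le_max_left _ _)⟩
  choose t ht0 ht using hzt
  choose C hC0 hC using hft
  have hsummable : ∀ k : Fin n, Summable fun i => l i * (f k (x i) * x' i (zz k)) := by
    intro k
    apply summable_mul_bound hl (t := C k * t k)
    intro i
    rw [norm_mul]
    exact mul_le_mul (hC k i) (ht k i) (norm_nonneg _) (hC0 k)
  have hkey : ∀ k : Fin n, ∑' i, l i * (f k (x i) * x' i (zz k)) = f k (A (zz k)) := by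
    intro k
    have h1 : Tendsto (fun m => ∑ i ∈ Finset.range m, (l i * x' i (zz k)) • x i)
        atTop (𝓝 (A (zz k))) := hconv (zz k)
    have h2 : Tendsto (fun m => (f k) (∑ i ∈ Finset.range m, (l i * x' i (zz k)) • x i))
        atTop (𝓝 (f k (A (zz k)))) := ((f k).continuous.tendsto _).comp h1
    have h3 : ∀ m, (f k) (∑ i ∈ Finset.range m, (l i * x' i (zz k)) • x i)
        = ∑ i ∈ Finset.range m, l i * (f k (x i) * x' i (zz k)) := by
      intro m
      rw [map_sum]
      apply Finset.sum_congr rfl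
      intro i _
      rw [map_smul, smul_eq_mul]
      ring
    simp only [h3] at h2
    exact tendsto_nhds_unique ((hsummable k).hasSum.tendsto_sum_nat) h2
  have hpt : ∀ i, l i * x' i (F (x i)) = ∑ k, l i * (f k (x i) * x' i (zz k)) := by
    intro i
    rw [hFrep (x i), map_sum, Finset.mul_sum]
    apply Finset.sum_congr rfl
    intro k _
    rw [map_smul, smul_eq_mul]
  calc ∑' i, l i * x' i (F (x i)) = ∑' i, ∑ k, l i * (f k (x i) * x' i (zz k)) :=
        tsum_congr hpt
    _ = ∑ k, ∑' i, l i * (f k (x i) * x' i (zz k)) := Summable.tsum_finsetSum fun k _ => hsummable k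
    _ = ∑ k, f k (A (zz k)) := Finset.sum_congr rfl fun k _ => hkey k

lemma rep_key {A : E → E} {l : ℕ → 𝕜} {x : ℕ → E} {x' : ℕ → E →L[𝕜] 𝕜}
    (h : NuclearRep 𝕜 A l x x') :
    ∃ (C : ℝ) (K U : Set E), 0 ≤ C ∧ IsCompact K ∧ Balanced 𝕜 K ∧ Convex ℝ K ∧ (0 : E) ∈ K ∧
      U ∈ 𝓝 (0 : E) ∧
      ∀ (G : E →L[𝕜] E) (δ : ℝ), 0 < δ → (∀ w ∈ K, G w ∈ (algebraMap ℝ 𝕜 δ) • U) →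
        (Summable fun i => l i * x' i (G (x i))) ∧
        ‖∑' i, l i * x' i (G (x i))‖ ≤ δ * C := by
  obtain ⟨hl, ⟨B₀, hb1, hb2, hb3, hb4, hxB⟩, ⟨U, hU, hUb⟩, hconv⟩ := h
  obtain ⟨β, hβpos, hβle, hβ0, hβsum⟩ := exists_beta hl
  set z : ℕ → E := fun i => β i • x i with hzdef
  have hzB : ∀ i, z i ∈ B₀ := by
    intro i
    have hzi : z i = algebraMap ℝ 𝕜 (β i) • x i := (algebraMap_smul 𝕜 (β i) (x i)).symm
    rw [hzi]
    apply hb1.smul_mem ?_ (hxB i)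
    rw [norm_algebraMap', Real.norm_of_nonneg (hβpos i).le]
    exact hβle i
  have hz0 : Tendsto z atTop (𝓝 0) := tendsto_smul_zero hb3 hxB hβpos hβ0
  obtain ⟨K, hKc, hKbal, hKconv, hzK, h0K⟩ := exists_compact_balanced hb1 hb2 hb4 hzB hz0
  refine ⟨∑' i, ‖l i‖ / β i, K, U,
    tsum_nonneg fun i => div_nonneg (norm_nonneg _) (hβpos i).le,
    hKc, hKbal, hKconv, h0K, hU, ?_⟩
  intro G δ hδ hG
  have hc : ∀ i, ‖x' i (G (x i))‖ ≤ δ / β i := by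
    intro i
    have h1 : G (z i) ∈ (algebraMap ℝ 𝕜 δ) • U := hG _ (hzK i)
    have h2 : ‖x' i (G (z i))‖ ≤ δ := norm_le_of_mem_smul (hUb i) hδ.le h1
    have h3 : G (z i) = algebraMap ℝ 𝕜 (β i) • G (x i) := by
      have hzi : z i = algebraMap ℝ 𝕜 (β i) • x i := (algebraMap_smul 𝕜 (β i) (x i)).symm
      rw [hzi, map_smul]
    rw [h3, map_smul, smul_eq_mul, norm_mul, norm_algebraMap',
      Real.norm_of_nonneg (hβpos i).le] at h2
    rw [le_div_iff₀ (hβpos i), mul_comm]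
    exact h2
  exact tsum_mul_bound hδ.le hβsum hc

end RepHelpers


/-- Suppose `E` possesses the weak approximation property. Then every
nuclear operator on `E` has a well-defined trace: any two nuclear representations of
the same operator give the same value `∑_{i=1}^∞ λ_i ⟨x'_i, x_i⟩`. Moreover, if a net
`{B_ν}` of continuous operators converges to `B ∈ L(E)` uniformly on all absolutely
convex compact subsets of `E`, then `tr (A ∘ B_ν) → tr (A ∘ B)` for every nuclear
operator `A` (where `tr (A ∘ C) = ∑_{i=1}^∞ λ_i ⟨x'_i, C x_i⟩`). -/
theorem statement10 (hwap : HasWeakAP 𝕜 E) :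
    (∀ (A : E → E) (l : ℕ → 𝕜) (x : ℕ → E) (x' : ℕ → E →L[𝕜] 𝕜)
        (μ : ℕ → 𝕜) (y : ℕ → E) (y' : ℕ → E →L[𝕜] 𝕜),
      NuclearRep 𝕜 A l x x' → NuclearRep 𝕜 A μ y y' →
      ∑' i, l i * x' i (x i) = ∑' j, μ j * y' j (y j)) ∧
    (∀ (A : E → E) (l : ℕ → 𝕜) (x : ℕ → E) (x' : ℕ → E →L[𝕜] 𝕜),
      NuclearRep 𝕜 A l x x' →
      ∀ (ι : Type) (lfil : Filter ι), lfil.NeBot →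
      ∀ (Bν : ι → E →L[𝕜] E) (B : E →L[𝕜] E),
        (∀ K : Set E, IsCompact K → Balanced 𝕜 K → Convex ℝ K →
          ∀ U ∈ 𝓝 (0 : E), ∀ᶠ ν in lfil, ∀ z ∈ K, Bν ν z - B z ∈ U) →
        Filter.Tendsto (fun ν => ∑' i, l i * x' i (Bν ν (x i))) lfil
          (𝓝 (∑' i, l i * x' i (B (x i))))) := by
  constructor
  · intro A l x x' μ y y' h1 h2
    obtain ⟨C₁, K₁, U₁, hC₁0, hK₁c, hK₁b, hK₁v, h0K₁, hU₁, hest₁⟩ := rep_key h1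
    obtain ⟨C₂, K₂, U₂, hC₂0, hK₂c, hK₂b, hK₂v, h0K₂, hU₂, hest₂⟩ := rep_key h2
    haveI := contSMulReal 𝕜 (E := E)
    set K : Set E := convexJoin ℝ K₁ K₂ with hKdef
    have hKc : IsCompact K := isCompact_convexJoin hK₁c hK₂c
    have hKb : Balanced 𝕜 K := balanced_convexJoin hK₁b hK₂b
    have hKv : Convex ℝ K := hK₁v.convexJoin hK₂v
    have hK₁K : K₁ ⊆ K := subset_convexJoin_left ⟨0, h0K₂⟩
    have hK₂K : K₂ ⊆ K := subset_convexJoin_right ⟨0, h0K₁⟩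
    have key : ∀ ε : ℝ, 0 < ε →
        ‖(∑' i, l i * x' i (x i)) - ∑' j, μ j * y' j (y j)‖ ≤ ε := by
      intro ε hε
      have hden : (0:ℝ) < C₁ + C₂ + 1 := by linarith
      set δ : ℝ := ε / (C₁ + C₂ + 1) with hδdef
      have hδ : 0 < δ := div_pos hε hden
      have hδk : algebraMap ℝ 𝕜 δ ≠ 0 := algebraMap_ne_zero' hδ
      set V : Set E := ((algebraMap ℝ 𝕜 δ) • U₁) ∩ ((algebraMap ℝ 𝕜 δ) • U₂) with hVdef
      have hVmem : V ∈ 𝓝 (0 : E) := Filter.inter_mem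
        ((set_smul_mem_nhds_zero_iff hδk).2 hU₁) ((set_smul_mem_nhds_zero_iff hδk).2 hU₂)
      obtain ⟨F, hFfr, hFap⟩ := hwap (ContinuousLinearMap.id 𝕜 E) K hKc hKb hKv V hVmem
      set G : E →L[𝕜] E := ContinuousLinearMap.id 𝕜 E - F with hGdef
      have hGw : ∀ w ∈ K, G w ∈ V := by
        intro w hw
        have := hFap w hw
        simpa [hGdef] using this
      obtain ⟨hs₁, he₁⟩ := hest₁ G δ hδ (fun w hw => (hGw w (hK₁K hw)).1)
      obtain ⟨hs₂, he₂⟩ := hest₂ G δ hδ (fun w hw => (hGw w (hK₂K hw)).2)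
      obtain ⟨n, zz, f, hdecomp⟩ := finiteRank_decomp hFfr
      have hS₁ : ∑' i, l i * x' i (F (x i)) = ∑ k, f k (A (zz k)) :=
        rep_trace_eq h1 zz f hdecomp
      have hS₂ : ∑' j, μ j * y' j (F (y j)) = ∑ k, f k (A (zz k)) :=
        rep_trace_eq h2 zz f hdecomp
      have hdiff₁ : (∑' i, l i * x' i (x i)) - (∑' i, l i * x' i (F (x i)))
          = ∑' i, l i * x' i (G (x i)) := by
        have hs1 := rep_summable_self h1
        have hs2 := rep_summable_comp h1 F
        rw [← Summable.tsum_sub hs1 hs2]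
        exact tsum_congr fun i => by
          simp [hGdef, ContinuousLinearMap.sub_apply, map_sub, mul_sub]
      have hdiff₂ : (∑' j, μ j * y' j (y j)) - (∑' j, μ j * y' j (F (y j)))
          = ∑' j, μ j * y' j (G (y j)) := by
        have hs1 := rep_summable_self h2
        have hs2 := rep_summable_comp h2 F
        rw [← Summable.tsum_sub hs1 hs2]
        exact tsum_congr fun j => by
          simp [hGdef, ContinuousLinearMap.sub_apply, map_sub, mul_sub]
      have hT : (∑' i, l i * x' i (x i)) - ∑' j, μ j * y' j (y j)
          = (∑' i, l i * x' i (G (x i))) - ∑' j, μ j * y' j (G (y j)) := by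
        have e1 : ∑' i, l i * x' i (x i)
            = (∑' i, l i * x' i (G (x i))) + ∑' i, l i * x' i (F (x i)) := by
          rw [← hdiff₁]; ring
        have e2 : ∑' j, μ j * y' j (y j)
            = (∑' j, μ j * y' j (G (y j))) + ∑' j, μ j * y' j (F (y j)) := by
          rw [← hdiff₂]; ring
        rw [e1, e2, hS₁, hS₂]; ring
      rw [hT]
      calc ‖(∑' i, l i * x' i (G (x i))) - ∑' j, μ j * y' j (G (y j))‖
          ≤ ‖∑' i, l i * x' i (G (x i))‖ + ‖∑' j, μ j * y' j (G (y j))‖ := norm_sub_le _ _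
        _ ≤ δ * C₁ + δ * C₂ := add_le_add he₁ he₂
        _ ≤ ε := by
            have hd : δ * C₁ + δ * C₂ = δ * (C₁ + C₂) := by ring
            rw [hd, hδdef, div_mul_eq_mul_div, div_le_iff₀ hden]
            nlinarith [mul_nonneg hε.le (add_nonneg hC₁0 hC₂0)]
    by_contra hne
    have hpos : 0 < ‖(∑' i, l i * x' i (x i)) - ∑' j, μ j * y' j (y j)‖ := by
      rw [norm_pos_iff, sub_ne_zero]
      exact hne
    have := key (‖(∑' i, l i * x' i (x i)) - ∑' j, μ j * y' j (y j)‖ / 2) (by linarith)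
    linarith
  · intro A l x x' h ι lfil hne Bν B hcb
    haveI := hne
    obtain ⟨C, K, U, hC0, hKc, hKb, hKv, h0K, hU, hest⟩ := rep_key h
    rw [Metric.tendsto_nhds]
    intro ε hε
    have hden : (0:ℝ) < 2 * (C + 1) := by linarith
    set δ : ℝ := ε / (2 * (C + 1)) with hδdef
    have hδ : 0 < δ := div_pos hε hden
    have hδk : algebraMap ℝ 𝕜 δ ≠ 0 := algebraMap_ne_zero' hδ
    have hV : (algebraMap ℝ 𝕜 δ) • U ∈ 𝓝 (0 : E) := (set_smul_mem_nhds_zero_iff hδk).2 hU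
    filter_upwards [hcb K hKc hKb hKv _ hV] with ν hν
    rw [dist_eq_norm]
    set G : E →L[𝕜] E := Bν ν - B with hGdef
    have hGmem : ∀ w ∈ K, G w ∈ (algebraMap ℝ 𝕜 δ) • U := by
      intro w hw
      simpa [hGdef, ContinuousLinearMap.sub_apply] using hν w hw
    obtain ⟨hsG, heG⟩ := hest G δ hδ hGmem
    have hdiff : (∑' i, l i * x' i (Bν ν (x i))) - ∑' i, l i * x' i (B (x i))
        = ∑' i, l i * x' i (G (x i)) := by
      have hs1 := rep_summable_comp h (Bν ν)
      have hs2 := rep_summable_comp h B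
      rw [← Summable.tsum_sub hs1 hs2]
      exact tsum_congr fun i => by
        simp [hGdef, ContinuousLinearMap.sub_apply, map_sub, mul_sub]
    rw [hdiff]
    calc ‖∑' i, l i * x' i (G (x i))‖ ≤ δ * C := heG
      _ < ε := by
          rw [hδdef, div_mul_eq_mul_div, div_lt_iff₀ hden]
          nlinarith [mul_nonneg hε.le hC0]
end

section
/- If a Hausdorff locally convex space E possesses the approximation property, then every nuclear operator on E possesses a well-defined trace: any two nuclear representations of the same operator yield the same value ∑_{i=1}^∞ λ_i ⟨x'_i, x_i⟩. -/
/-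
Setting: `E` is a Hausdorff locally convex topological vector space over `𝕜 = ℝ` or `ℂ`
(`RCLike 𝕜`), with `E' = E →L[𝕜] 𝕜` its (strong) dual.
-/

open Filter Topology Bornology

variable {𝕜 : Type} [RCLike 𝕜] {E : Type} [AddCommGroup E] [Module 𝕜 E]
  [UniformSpace E] [IsUniformAddGroup E] [ContinuousSMul 𝕜 E]
  [Module ℝ E] [IsScalarTower ℝ 𝕜 E] [LocallyConvexSpace ℝ E] [T2Space E]

section Aux

open scoped Pointwise

/-- Rescaling trick: given a summable nonnegative sequence `a`, there is a positive
sequence `β` tending to zero with `a k / β k` still summable. -/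
private lemma aux_scaling (a : ℕ → ℝ) (ha : Summable a) (hpos : ∀ k, 0 ≤ a k) :
    ∃ β : ℕ → ℝ, (∀ k, 0 < β k) ∧ Tendsto β atTop (𝓝 0) ∧
      Summable (fun k => a k / β k) := by
  set t : ℕ → ℝ := fun i => ∑' k, a (k + i) with ht
  have htnonneg : ∀ i, 0 ≤ t i := fun i => tsum_nonneg fun k => hpos _
  have hteq : ∀ i, t i = (∑' k, a k) - ∑ j ∈ Finset.range i, a j := by
    intro i
    have h := ha.sum_add_tsum_nat_add i
    simp only [ht]
    linarith
  have hsub : ∀ i, t i - t (i + 1) = a i := by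
    intro i; rw [hteq, hteq, Finset.sum_range_succ]; ring
  have hanti : ∀ i, t (i + 1) ≤ t i := by
    intro i; have := hsub i; have := hpos i; linarith
  have htend : Tendsto t atTop (𝓝 0) := tendsto_sum_nat_add a
  set β : ℕ → ℝ := fun k => Real.sqrt (t k) + (1 / 2 : ℝ) ^ k with hβ
  have hβpos : ∀ k, 0 < β k := fun k =>
    add_pos_of_nonneg_of_pos (Real.sqrt_nonneg _) (by positivity)
  have hβ0 : Tendsto β atTop (𝓝 0) := by
    have h1 : Tendsto (fun k => Real.sqrt (t k)) atTop (𝓝 0) := by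
      simpa using htend.sqrt
    have h2 : Tendsto (fun k : ℕ => (1 / 2 : ℝ) ^ k) atTop (𝓝 0) :=
      tendsto_pow_atTop_nhds_zero_of_lt_one (by norm_num) (by norm_num)
    have h3 := h1.add h2
    rw [hβ]
    simpa using h3
  have hg : Summable (fun k => 2 * (Real.sqrt (t k) - Real.sqrt (t (k + 1)))) := by
    apply summable_of_sum_range_le (c := 2 * Real.sqrt (t 0))
    · intro n
      have := Real.sqrt_le_sqrt (hanti n)
      linarith
    · intro n
      rw [← Finset.mul_sum, Finset.sum_range_sub' (fun i => Real.sqrt (t i))]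
      nlinarith [Real.sqrt_nonneg (t n)]
  refine ⟨β, hβpos, hβ0, Summable.of_nonneg_of_le
    (fun k => div_nonneg (hpos k) (hβpos k).le) (fun k => ?_) hg⟩
  rcases eq_or_lt_of_le (htnonneg k) with h0 | hpos'
  · have ht1 : t (k + 1) = 0 := le_antisymm (by linarith [hanti k]) (htnonneg (k + 1))
    have hak : a k = 0 := by have := hsub k; linarith
    simp [hak, ← h0, ht1]
  · have hu2 : Real.sqrt (t k) ^ 2 = t k := Real.sq_sqrt (htnonneg k)
    have hv2 : Real.sqrt (t (k + 1)) ^ 2 = t (k + 1) := Real.sq_sqrt (htnonneg (k + 1))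
    set u := Real.sqrt (t k) with hudef
    set v := Real.sqrt (t (k + 1)) with hvdef
    have hu0 : 0 < u := Real.sqrt_pos.2 hpos'
    have hv0 : 0 ≤ v := Real.sqrt_nonneg _
    have hvu : v ≤ u := Real.sqrt_le_sqrt (hanti k)
    have hβk : u ≤ β k := le_add_of_nonneg_right (by positivity)
    have h1 : a k / β k ≤ a k / u := by
      apply div_le_div_of_nonneg_left (hpos k) hu0 hβk
    refine h1.trans ?_
    rw [div_le_iff₀ hu0]
    have hak : a k = u ^ 2 - v ^ 2 := by rw [hu2, hv2]; exact (hsub k).symm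
    nlinarith [sq_nonneg (u - v)]

variable {𝕜 : Type} [RCLike 𝕜] {E : Type} [AddCommGroup E] [Module 𝕜 E]
  [UniformSpace E] [IsUniformAddGroup E] [ContinuousSMul 𝕜 E]
  [Module ℝ E] [IsScalarTower ℝ 𝕜 E] [T2Space E]

/-- From absorption, a uniform bound for an equicontinuous family on a set. -/
private lemma aux_bound (f : ℕ → E →L[𝕜] 𝕜) (U : Set E)
    (h1 : ∀ i, ∀ v ∈ U, ‖f i v‖ ≤ 1) (s : Set E) (habs : Absorbs 𝕜 U s) :
    ∃ C : ℝ, 0 ≤ C ∧ ∀ i, ∀ w ∈ s, ‖f i w‖ ≤ C := by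
  obtain ⟨r, hr⟩ := absorbs_iff_norm.1 habs
  obtain ⟨c, hc⟩ := NormedField.exists_lt_norm 𝕜 (max r 0)
  have hsub := hr c (le_of_lt (lt_of_le_of_lt (le_max_left r 0) hc))
  refine ⟨‖c‖, norm_nonneg c, fun i w hw => ?_⟩
  obtain ⟨u, hu, rfl⟩ := Set.mem_smul_set.1 (hsub hw)
  rw [map_smul, smul_eq_mul, norm_mul]
  calc ‖c‖ * ‖f i u‖ ≤ ‖c‖ * 1 := mul_le_mul_of_nonneg_left (h1 i u hu) (norm_nonneg c)
    _ = ‖c‖ := mul_one _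

/-- A finite-rank operator decomposes as a finite sum of rank-one operators with
continuous coefficient functionals. -/
private lemma aux_finrank (F : E →L[𝕜] E) (hF : IsFiniteRank 𝕜 F) :
    ∃ (n : ℕ) (g : Fin n → E →L[𝕜] 𝕜) (w : Fin n → E),
      ∀ v, F v = ∑ m, g m v • w m := by
  haveI : FiniteDimensional 𝕜 (LinearMap.range ((F : E →L[𝕜] E) : E →ₗ[𝕜] E)) := hF
  set R := LinearMap.range ((F : E →L[𝕜] E) : E →ₗ[𝕜] E) with hR
  let b := Module.finBasis 𝕜 R
  let Fc : E →L[𝕜] R := F.codRestrict R (fun v => LinearMap.mem_range_self _ v)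
  refine ⟨Module.finrank 𝕜 R,
    fun m => (LinearMap.toContinuousLinearMap (b.coord m)).comp Fc,
    fun m => ((b m : R) : E), fun v => ?_⟩
  have hrepr := b.sum_repr (Fc v)
  have h1 : F v = ((Fc v : R) : E) := rfl
  rw [h1, ← hrepr]
  push_cast
  rfl

/-- For a nuclear representation of `A` and a finite-rank operator `F` decomposed as
`F v = ∑ m, g m v • w m`, the sum `∑' k, l k * x' k (F (x k))` equals
`∑ m, g m (A (w m))`, a quantity depending only on `F` and `A`. -/
private lemma aux_Ftrace (A : E → E) (l : ℕ → 𝕜) (x : ℕ → E) (x' : ℕ → E →L[𝕜] 𝕜)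
    (h : NuclearRep 𝕜 A l x x')
    {n : ℕ} (g : Fin n → E →L[𝕜] 𝕜) (w : Fin n → E) (F : E →L[𝕜] E)
    (hFdec : ∀ v, F v = ∑ m, g m v • w m) :
    Summable (fun k => l k * x' k (F (x k))) ∧
      ∑' k, l k * x' k (F (x k)) = ∑ m, g m (A (w m)) := by
  obtain ⟨hl, ⟨B, hBbal, hBconv, hBbdd, hBcompl, hxB⟩, ⟨U, hU, hU1⟩, hAconv⟩ := h
  have key : ∀ m : Fin n, Summable (fun k => l k * x' k (w m) * g m (x k)) ∧
      ∑' k, l k * x' k (w m) * g m (x k) = g m (A (w m)) := by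
    intro m
    obtain ⟨C1, hC10, hC1⟩ := aux_bound x' U hU1 {w m} ((absorbent_nhds_zero hU) (w m))
    have hV : (g m) ⁻¹' Metric.closedBall (0 : 𝕜) 1 ∈ 𝓝 (0 : E) := by
      apply (g m).continuous.continuousAt.preimage_mem_nhds
      rw [map_zero]
      exact Metric.closedBall_mem_nhds (0 : 𝕜) one_pos
    obtain ⟨C2, hC20, hC2⟩ := aux_bound (fun _ : ℕ => g m) _
      (fun _ v hv => by simpa [Metric.mem_closedBall, dist_zero_right] using hv)
      B (hBbdd hV)
    have hsum : Summable (fun k => l k * x' k (w m) * g m (x k)) := by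
      apply Summable.of_norm_bounded (g := fun k => ‖l k‖ * (C1 * C2)) (hl.mul_right _)
      intro k
      rw [norm_mul, norm_mul, mul_assoc]
      exact mul_le_mul_of_nonneg_left
        (mul_le_mul (hC1 k (w m) rfl) (hC2 k (x k) (hxB k)) (norm_nonneg _) hC10)
        (norm_nonneg _)
    have h1 : Tendsto (fun N => ∑ k ∈ Finset.range N, l k * x' k (w m) * g m (x k))
        atTop (𝓝 (g m (A (w m)))) := by
      have h2 := ((g m).continuous.tendsto (A (w m))).comp (hAconv (w m))
      have h3 : ∀ N, g m (∑ k ∈ Finset.range N, (l k * x' k (w m)) • x k) =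
          ∑ k ∈ Finset.range N, l k * x' k (w m) * g m (x k) := by
        intro N
        rw [map_sum]
        exact Finset.sum_congr rfl fun k _ => by rw [map_smul, smul_eq_mul]
      simpa [Function.comp_def, h3] using h2
    exact ⟨hsum, tendsto_nhds_unique hsum.hasSum.tendsto_sum_nat h1⟩
  have hpt : ∀ k, l k * x' k (F (x k)) = ∑ m, l k * x' k (w m) * g m (x k) := by
    intro k
    rw [hFdec (x k), map_sum, Finset.mul_sum]
    exact Finset.sum_congr rfl fun m _ => by rw [map_smul, smul_eq_mul]; ring
  constructor
  · exact (summable_sum (fun m _ => (key m).1)).congr (fun k => (hpt k).symm)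
  · calc ∑' k, l k * x' k (F (x k)) = ∑' k, ∑ m, l k * x' k (w m) * g m (x k) :=
          tsum_congr hpt
      _ = ∑ m, ∑' k, l k * x' k (w m) * g m (x k) := Summable.tsum_finsetSum (fun m _ => (key m).1)
      _ = ∑ m, g m (A (w m)) := Finset.sum_congr rfl (fun m _ => (key m).2)

/-- The trace series of a nuclear representation is summable. -/
private lemma aux_trace_summable (A : E → E) (l : ℕ → 𝕜) (x : ℕ → E)
    (x' : ℕ → E →L[𝕜] 𝕜) (h : NuclearRep 𝕜 A l x x') :
    Summable (fun k => l k * x' k (x k)) := by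
  obtain ⟨hl, ⟨B, _, _, hBbdd, _, hxB⟩, ⟨U, hU, hU1⟩, _⟩ := h
  obtain ⟨C, hC0, hC⟩ := aux_bound x' U hU1 B (hBbdd hU)
  apply Summable.of_norm_bounded (g := fun k => ‖l k‖ * C) (hl.mul_right C)
  intro k
  rw [norm_mul]
  exact mul_le_mul_of_nonneg_left (hC k (x k) (hxB k)) (norm_nonneg _)

/-- Quantitative estimate: if `F` approximates the identity within `ε • U` on the
rescaled sequence `β k • x k`, then the `F`-trace is within `ε * ∑' ‖l k‖ / β k`
of the trace. -/
private lemma aux_estimate (l : ℕ → 𝕜) (x : ℕ → E) (x' : ℕ → E →L[𝕜] 𝕜)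
    {U : Set E} (hU1 : ∀ i, ∀ v ∈ U, ‖x' i v‖ ≤ 1)
    (β : ℕ → ℝ) (hβpos : ∀ k, 0 < β k) (hβsum : Summable fun k => ‖l k‖ / β k)
    {ε : ℝ} (hε : 0 < ε) (F : E →L[𝕜] E)
    (hTs : Summable fun k => l k * x' k (x k))
    (hFs : Summable fun k => l k * x' k (F (x k)))
    (hcl : ∀ k, ((β k : ℝ) : 𝕜) • x k - F (((β k : ℝ) : 𝕜) • x k) ∈
      ((ε : ℝ) : 𝕜) • U) :
    ‖(∑' k, l k * x' k (x k)) - ∑' k, l k * x' k (F (x k))‖ ≤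
      ε * ∑' k, ‖l k‖ / β k := by
  have hterm : ∀ k, ‖x' k (x k - F (x k))‖ ≤ ε / β k := by
    intro k
    have hmem : ((β k : ℝ) : 𝕜) • (x k - F (x k)) ∈ ((ε : ℝ) : 𝕜) • U := by
      have := hcl k
      rwa [map_smul, ← smul_sub] at this
    obtain ⟨u, hu, huv⟩ := Set.mem_smul_set.1 hmem
    have happ : ((ε : ℝ) : 𝕜) * x' k u = ((β k : ℝ) : 𝕜) * x' k (x k - F (x k)) := by
      rw [← smul_eq_mul, ← smul_eq_mul, ← map_smul, ← map_smul, huv]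
    have hnorm : ε * ‖x' k u‖ = β k * ‖x' k (x k - F (x k))‖ := by
      have h := congrArg norm happ
      rwa [norm_mul, norm_mul, RCLike.norm_ofReal, RCLike.norm_ofReal,
        abs_of_pos hε, abs_of_pos (hβpos k)] at h
    rw [le_div_iff₀ (hβpos k)]
    nlinarith [hU1 k u hu, norm_nonneg (x' k u), hε.le]
  have hbound : ∀ k, ‖l k * x' k (x k) - l k * x' k (F (x k))‖ ≤ ε * (‖l k‖ / β k) := by
    intro k
    rw [← mul_sub, ← map_sub, norm_mul]
    calc ‖l k‖ * ‖x' k (x k - F (x k))‖ ≤ ‖l k‖ * (ε / β k) :=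
          mul_le_mul_of_nonneg_left (hterm k) (norm_nonneg _)
      _ = ε * (‖l k‖ / β k) := by ring
  have hs2 : Summable (fun k => ε * (‖l k‖ / β k)) := hβsum.mul_left ε
  have hsd : Summable fun k => ‖l k * x' k (x k) - l k * x' k (F (x k))‖ :=
    Summable.of_nonneg_of_le (fun k => norm_nonneg _) hbound hs2
  rw [← Summable.tsum_sub hTs hFs]
  calc ‖∑' k, (l k * x' k (x k) - l k * x' k (F (x k)))‖
      ≤ ∑' k, ‖l k * x' k (x k) - l k * x' k (F (x k))‖ :=
        norm_tsum_le_tsum_norm hsd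
    _ ≤ ∑' k, ε * (‖l k‖ / β k) := Summable.tsum_le_tsum hbound hsd hs2
    _ = ε * ∑' k, ‖l k‖ / β k := tsum_mul_left

end Aux

open scoped Pointwise

/-- If a Hausdorff locally convex space `E` possesses the approximation
property, then every nuclear operator on `E` possesses a well-defined trace: any two
nuclear representations of the same operator yield the same value
`∑_{i=1}^∞ λ_i ⟨x'_i, x_i⟩`. -/
theorem statement11 (hap : HasAP 𝕜 E) :
    ∀ (A : E → E) (l : ℕ → 𝕜) (x : ℕ → E) (x' : ℕ → E →L[𝕜] 𝕜)
      (μ : ℕ → 𝕜) (y : ℕ → E) (y' : ℕ → E →L[𝕜] 𝕜),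
      NuclearRep 𝕜 A l x x' → NuclearRep 𝕜 A μ y y' →
      ∑' i, l i * x' i (x i) = ∑' j, μ j * y' j (y j) := by
  intro A l x x' μ y y' hx hy
  obtain ⟨βx, hβxpos, hβx0, hβxsum⟩ :=
    aux_scaling (fun k => ‖l k‖) hx.1 (fun k => norm_nonneg _)
  obtain ⟨βy, hβypos, hβy0, hβysum⟩ :=
    aux_scaling (fun k => ‖μ k‖) hy.1 (fun k => norm_nonneg _)
  set Dx := ∑' k, ‖l k‖ / βx k with hDxdef
  set Dy := ∑' k, ‖μ k‖ / βy k with hDydef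
  have hDx0 : 0 ≤ Dx := tsum_nonneg fun k => div_nonneg (norm_nonneg _) (hβxpos k).le
  have hDy0 : 0 ≤ Dy := tsum_nonneg fun k => div_nonneg (norm_nonneg _) (hβypos k).le
  have hTxs := aux_trace_summable A l x x' hx
  have hTys := aux_trace_summable A μ y y' hy
  obtain ⟨hl, ⟨B, hBbal, hBconv, hBbdd, hBcompl, hxB⟩, ⟨U, hU, hU1⟩, hAx⟩ := id hx
  obtain ⟨hμ, ⟨B', hB'bal, hB'conv, hB'bdd, hB'compl, hyB⟩, ⟨V, hV, hV1⟩, hAy⟩ := id hy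
  -- the rescaled sequences converge to zero, so their ranges are totally bounded
  have hcx : Tendsto (fun k => ((βx k : ℝ) : 𝕜) • x k) atTop (𝓝 (0 : E)) := by
    have hsc : Tendsto (fun k => ((βx k : ℝ) : 𝕜)) atTop (𝓝 (0 : 𝕜)) := by
      have := (RCLike.continuous_ofReal (K := 𝕜)).tendsto (0 : ℝ) |>.comp hβx0
      simpa [Function.comp_def] using this
    exact hBbdd.smul_tendsto_zero (Filter.Eventually.of_forall hxB) hsc
  have hcy : Tendsto (fun k => ((βy k : ℝ) : 𝕜) • y k) atTop (𝓝 (0 : E)) := by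
    have hsc : Tendsto (fun k => ((βy k : ℝ) : 𝕜)) atTop (𝓝 (0 : 𝕜)) := by
      have := (RCLike.continuous_ofReal (K := 𝕜)).tendsto (0 : ℝ) |>.comp hβy0
      simpa [Function.comp_def] using this
    exact hB'bdd.smul_tendsto_zero (Filter.Eventually.of_forall hyB) hsc
  set S : Set E := (insert (0 : E) (Set.range fun k => ((βx k : ℝ) : 𝕜) • x k)) ∪
    (insert (0 : E) (Set.range fun k => ((βy k : ℝ) : 𝕜) • y k)) with hSdef
  have hS : TotallyBounded S :=
    ((hcx.isCompact_insert_range).union (hcy.isCompact_insert_range)).totallyBounded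
  -- the main estimate
  have main : ∀ ε : ℝ, 0 < ε →
      ‖(∑' i, l i * x' i (x i)) - ∑' j, μ j * y' j (y j)‖ ≤ ε * (Dx + Dy) := by
    intro ε hε
    have hε𝕜 : ((ε : ℝ) : 𝕜) ≠ 0 := RCLike.ofReal_ne_zero.2 (ne_of_gt hε)
    have hW : (((ε : ℝ) : 𝕜) • U) ∩ (((ε : ℝ) : 𝕜) • V) ∈ 𝓝 (0 : E) := by
      apply Filter.inter_mem
      · have h := (smul_mem_nhds_smul_iff₀ (x := (0 : E)) (s := U) hε𝕜).2 hU
        simpa using h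
      · have h := (smul_mem_nhds_smul_iff₀ (x := (0 : E)) (s := V) hε𝕜).2 hV
        simpa using h
    obtain ⟨F, hFfr, hFcl⟩ := hap (ContinuousLinearMap.id 𝕜 E) S hS _ hW
    obtain ⟨n, g, w, hFdec⟩ := aux_finrank F hFfr
    have hKx := aux_Ftrace A l x x' hx g w F hFdec
    have hKy := aux_Ftrace A μ y y' hy g w F hFdec
    have hclx : ∀ k, ((βx k : ℝ) : 𝕜) • x k - F (((βx k : ℝ) : 𝕜) • x k) ∈
        ((ε : ℝ) : 𝕜) • U := by
      intro k
      have hmem : ((βx k : ℝ) : 𝕜) • x k ∈ S :=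
        Or.inl (Set.mem_insert_of_mem _ ⟨k, rfl⟩)
      have h2 : ((βx k : ℝ) : 𝕜) • x k - F (((βx k : ℝ) : 𝕜) • x k) ∈
          (((ε : ℝ) : 𝕜) • U) ∩ (((ε : ℝ) : 𝕜) • V) := by
        simpa using hFcl _ hmem
      exact h2.1
    have hcly : ∀ k, ((βy k : ℝ) : 𝕜) • y k - F (((βy k : ℝ) : 𝕜) • y k) ∈
        ((ε : ℝ) : 𝕜) • V := by
      intro k
      have hmem : ((βy k : ℝ) : 𝕜) • y k ∈ S :=
        Or.inr (Set.mem_insert_of_mem _ ⟨k, rfl⟩)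
      have h2 : ((βy k : ℝ) : 𝕜) • y k - F (((βy k : ℝ) : 𝕜) • y k) ∈
          (((ε : ℝ) : 𝕜) • U) ∩ (((ε : ℝ) : 𝕜) • V) := by
        simpa using hFcl _ hmem
      exact h2.2
    have ex := aux_estimate l x x' hU1 βx hβxpos hβxsum hε F hTxs hKx.1 hclx
    have ey := aux_estimate μ y y' hV1 βy hβypos hβysum hε F hTys hKy.1 hcly
    have heq : ∑' k, l k * x' k (F (x k)) = ∑' k, μ k * y' k (F (y k)) := by
      rw [hKx.2, hKy.2]
    have hsplit : (∑' i, l i * x' i (x i)) - ∑' j, μ j * y' j (y j) =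
        ((∑' k, l k * x' k (x k)) - ∑' k, l k * x' k (F (x k))) +
        ((∑' k, μ k * y' k (F (y k))) - ∑' k, μ k * y' k (y k)) := by
      rw [← heq]; ring
    rw [hsplit]
    have ey' : ‖(∑' k, μ k * y' k (F (y k))) - ∑' k, μ k * y' k (y k)‖ ≤ ε * Dy := by
      rw [norm_sub_rev]; exact ey
    calc ‖((∑' k, l k * x' k (x k)) - ∑' k, l k * x' k (F (x k))) +
          ((∑' k, μ k * y' k (F (y k))) - ∑' k, μ k * y' k (y k))‖
        ≤ ‖(∑' k, l k * x' k (x k)) - ∑' k, l k * x' k (F (x k))‖ +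
          ‖(∑' k, μ k * y' k (F (y k))) - ∑' k, μ k * y' k (y k)‖ := norm_add_le _ _
      _ ≤ ε * Dx + ε * Dy := add_le_add ex ey'
      _ = ε * (Dx + Dy) := by ring
  -- conclude
  have hle : ∀ ε : ℝ, 0 < ε →
      ‖(∑' i, l i * x' i (x i)) - ∑' j, μ j * y' j (y j)‖ ≤ 0 + ε := by
    intro ε hε
    have h1 := main (ε / (Dx + Dy + 1)) (by positivity)
    have h2 : ε / (Dx + Dy + 1) * (Dx + Dy) ≤ ε := by
      rw [div_mul_eq_mul_div, div_le_iff₀ (by positivity)]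
      nlinarith
    linarith
  have hz := norm_le_zero_iff.1 (by simpa using le_of_forall_pos_le_add hle)
  exact sub_eq_zero.1 hz
end

section
/- Suppose a Hausdorff locally convex space E possesses the bounded approximation property. Then the trace of every Fredholm operator on E is well-defined: any two Fredholm representations of the same operator yield the same value ∑_{i=1}^∞ λ_i ⟨x'_i, x_i⟩. Moreover, if a net {A_ν} of weakly continuous operators converges to A in the weak operator topology and is bounded in that topology, then tr(F∘A_ν) → tr(F∘A) for every Fredholm operator F on E. -/
/-
Setting: `E` is a Hausdorff locally convex topological vector space over `𝕜 = ℝ` or `ℂ`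
(`RCLike 𝕜`), with `E' = E →L[𝕜] 𝕜` its (strong) dual.
-/

open Filter Topology Bornology

/-! ### Auxiliary development -/

section DiskSpaceAux

open Set Pointwise

variable {𝕜 : Type} [RCLike 𝕜] {V : Type} [AddCommGroup V] [Module 𝕜 V]

/-- The linear span of `B`, as a bare type (to be normed by the gauge of `B`). -/
def DiskSpace (𝕜 : Type) [RCLike 𝕜] {V : Type} [AddCommGroup V] [Module 𝕜 V] (B : Set V) :
    Type := ↥(Submodule.span 𝕜 B)

instance {B : Set V} : AddCommGroup (DiskSpace 𝕜 B) :=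
  inferInstanceAs (AddCommGroup ↥(Submodule.span 𝕜 B))
instance {B : Set V} : Module 𝕜 (DiskSpace 𝕜 B) :=
  inferInstanceAs (Module 𝕜 ↥(Submodule.span 𝕜 B))

variable [Module ℝ V] [IsScalarTower ℝ 𝕜 V]

lemma span_absorbs {B : Set V} (hb : Balanced 𝕜 B) (hc : Convex ℝ B) (h0 : (0:V) ∈ B)
    {v : V} (hv : v ∈ Submodule.span 𝕜 B) : ∃ r : ℝ, 0 < r ∧ v ∈ r • B := by
  induction hv using Submodule.span_induction with
  | mem z hz => exact ⟨1, one_pos, by simpa using hz⟩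
  | zero => exact ⟨1, one_pos, by simpa using h0⟩
  | add z w _ _ ihz ihw =>
    obtain ⟨r, hr, hzr⟩ := ihz; obtain ⟨s, hs, hws⟩ := ihw
    exact ⟨r + s, by positivity, by rw [hc.add_smul hr.le hs.le]; exact Set.add_mem_add hzr hws⟩
  | smul c z _ ih =>
    obtain ⟨r, hr, hzr⟩ := ih
    by_cases hc0 : c = 0
    · exact ⟨r, hr, by rw [hc0, zero_smul]; exact ⟨0, h0, by simp⟩⟩
    · obtain ⟨b, hbB, rfl⟩ := hzr
      refine ⟨‖c‖ * r, mul_pos (norm_pos_iff.mpr hc0) hr, ?_⟩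
      set u : 𝕜 := (‖c‖ : 𝕜)⁻¹ * c with hu
      have hcn : ((‖c‖ : ℝ) : 𝕜) ≠ 0 := by
        simpa using norm_ne_zero_iff.mpr hc0
      have hnormu : ‖u‖ ≤ 1 := by
        rw [hu, norm_mul, norm_inv, RCLike.norm_ofReal, abs_of_nonneg (norm_nonneg c),
          inv_mul_cancel₀ (norm_ne_zero_iff.mpr hc0)]
      refine ⟨u • b, hb.smul_mem hnormu hbB, ?_⟩
      have key : ((‖c‖ * r : ℝ) : 𝕜) * u = c * ((r : ℝ) : 𝕜) := by
        rw [hu]; push_cast; field_simp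
      calc (‖c‖ * r) • (u • b) = (((‖c‖ * r : ℝ) : 𝕜) * u) • b := by
            rw [RCLike.real_smul_eq_coe_smul (K := 𝕜), smul_smul]
        _ = (c * ((r:ℝ):𝕜)) • b := by rw [key]
        _ = c • r • b := by rw [mul_smul, ← RCLike.real_smul_eq_coe_smul (K := 𝕜)]

lemma gauge_exists_lt {B : Set V} {v : V} (hv : ∃ r : ℝ, 0 < r ∧ v ∈ r • B)
    {ε : ℝ} (hε : 0 < ε) : ∃ r : ℝ, 0 < r ∧ v ∈ r • B ∧ r < gauge B v + ε := by
  have hne : {r : ℝ | 0 < r ∧ v ∈ r • B}.Nonempty := hv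
  have hbdd : BddBelow {r : ℝ | 0 < r ∧ v ∈ r • B} := ⟨0, fun r hr => hr.1.le⟩
  have hlt : sInf {r : ℝ | 0 < r ∧ v ∈ r • B} < gauge B v + ε := by
    have : gauge B v = sInf {r : ℝ | 0 < r ∧ v ∈ r • B} := rfl
    linarith [this ▸ lt_add_of_pos_right (gauge B v) hε]
  obtain ⟨r, hrS, hrlt⟩ := (csInf_lt_iff hbdd hne).1 hlt
  exact ⟨r, hrS.1, hrS.2, hrlt⟩

lemma gauge_add_le'' {B : Set V} (hc : Convex ℝ B)
    {v w : V} (hv : ∃ r : ℝ, 0 < r ∧ v ∈ r • B) (hw : ∃ r : ℝ, 0 < r ∧ w ∈ r • B) :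
    gauge B (v + w) ≤ gauge B v + gauge B w := by
  refine le_of_forall_pos_le_add fun ε hε => ?_
  obtain ⟨r, hr, hvr, hrlt⟩ := gauge_exists_lt hv (half_pos hε)
  obtain ⟨s, hs, hws, hslt⟩ := gauge_exists_lt hw (half_pos hε)
  have hmem : v + w ∈ (r + s) • B := by
    rw [hc.add_smul hr.le hs.le]; exact Set.add_mem_add hvr hws
  have := gauge_le_of_mem (by positivity) hmem
  linarith

lemma gauge_neg'' {B : Set V} (hb : Balanced 𝕜 B) (v : V) : gauge B (-v) = gauge B v := by
  have h := gauge_smul (𝕜 := 𝕜) hb (-1 : 𝕜) v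
  simpa using h

lemma gauge_eq_zero_imp {B : Set V} [TopologicalSpace V] [T2Space V]
    (hbdd : IsVonNBounded 𝕜 B) {v : V} (hv : ∃ r : ℝ, 0 < r ∧ v ∈ r • B)
    (h : gauge B v = 0) : v = 0 := by
  have hex : ∀ n : ℕ, ∃ r : ℝ, 0 < r ∧ v ∈ r • B ∧ r < 1 / (n + 1) := by
    intro n
    obtain ⟨r, hr, hvr, hlt⟩ := gauge_exists_lt hv (ε := 1 / (n + 1)) (by positivity)
    exact ⟨r, hr, hvr, by rw [h] at hlt; linarith⟩
  choose r hr hvr hlt using hex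
  have hbmem : ∀ n, ∃ b ∈ B, v = r n • b := by
    intro n
    obtain ⟨b, hbB, hb⟩ := hvr n
    exact ⟨b, hbB, hb.symm⟩
  choose b hbB hvb using hbmem
  have hrt : Tendsto r atTop (𝓝 0) := by
    refine squeeze_zero (fun n => (hr n).le) (fun n => (hlt n).le) ?_
    exact tendsto_one_div_add_atTop_nhds_zero_nat
  have hrt' : Tendsto (fun n => ((r n : ℝ) : 𝕜)) atTop (𝓝 0) := by
    have := (RCLike.continuous_ofReal (K := 𝕜)).tendsto (0 : ℝ)
    simpa [Function.comp_def] using this.comp hrt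
  have hten : Tendsto (fun n => ((r n : ℝ) : 𝕜) • b n) atTop (𝓝 0) :=
    hbdd.smul_tendsto_zero (Eventually.of_forall hbB) hrt'
  have hconst : ∀ n, ((r n : ℝ) : 𝕜) • b n = v := by
    intro n
    rw [← RCLike.real_smul_eq_coe_smul (K := 𝕜), ← hvb n]
  rw [funext hconst] at hten
  exact tendsto_nhds_unique tendsto_const_nhds hten

lemma norm_le_gauge_mul {B : Set V} {φ : V →ₗ[𝕜] 𝕜} {M : ℝ} (hM0 : 0 ≤ M)
    (hM : ∀ b ∈ B, ‖φ b‖ ≤ M) {v : V} (hv : ∃ r : ℝ, 0 < r ∧ v ∈ r • B) :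
    ‖φ v‖ ≤ M * gauge B v := by
  refine le_of_forall_pos_le_add fun ε hε => ?_
  have hδ : (0:ℝ) < ε / (M + 1) := by positivity
  obtain ⟨s, hs, hvs, hslt⟩ := gauge_exists_lt hv hδ
  obtain ⟨c, hcB, rfl⟩ := hvs
  have hφ : ‖φ (s • c)‖ = s * ‖φ c‖ := by
    rw [RCLike.real_smul_eq_coe_smul (K := 𝕜), map_smul, smul_eq_mul, norm_mul,
      RCLike.norm_ofReal, abs_of_pos hs]
  rw [hφ]
  have h1 : s * ‖φ c‖ ≤ s * M := mul_le_mul_of_nonneg_left (hM c hcB) hs.le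
  have h2 : s * M ≤ (gauge B (s • c) + ε / (M + 1)) * M :=
    mul_le_mul_of_nonneg_right hslt.le hM0
  have h3 : (ε / (M + 1)) * M ≤ ε := by
    rw [div_mul_eq_mul_div, div_le_iff₀ (by positivity)]
    nlinarith
  nlinarith [gauge_nonneg (s • c) (s := B)]

variable [TopologicalSpace V] [T2Space V]

/-- Uniform boundedness principle on a Banach disk: a family of linear functionals,
each bounded on the disk `B`, that is pointwise bounded on the span of `B`, is
uniformly bounded on `B`. -/
theorem disk_uniform_bound {B : Set V} (hB : IsBanachDisk 𝕜 B) {ι : Type}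
    (φ : ι → V →ₗ[𝕜] 𝕜)
    (hbd : ∀ i, ∃ M, ∀ b ∈ B, ‖φ i b‖ ≤ M)
    (hpt : ∀ v ∈ Submodule.span 𝕜 B, ∃ C, ∀ i, ‖φ i v‖ ≤ C) :
    ∃ C : ℝ, ∀ i, ∀ b ∈ B, ‖φ i b‖ ≤ C := by
  rcases B.eq_empty_or_nonempty with rfl | ⟨b0, hb0⟩
  · exact ⟨0, by simp⟩
  obtain ⟨hb, hc, hbdd, hcomp⟩ := hB
  have h0 : (0:V) ∈ B := by simpa using hb.smul_mem (a := (0:𝕜)) (by simp) hb0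
  have habs : ∀ v : DiskSpace 𝕜 B, ∃ r : ℝ, 0 < r ∧ v.1 ∈ r • B :=
    fun v => span_absorbs hb hc h0 v.2
  letI : NormedAddCommGroup (DiskSpace 𝕜 B) := AddGroupNorm.toNormedAddCommGroup
    { toFun := fun v => gauge B v.1
      map_zero' := gauge_zero
      add_le' := fun v w => gauge_add_le'' hc (habs v) (habs w)
      neg' := fun v => gauge_neg'' (𝕜 := 𝕜) hb v.1
      eq_zero_of_map_eq_zero' := fun v hv =>
        Subtype.ext (gauge_eq_zero_imp hbdd (habs v) hv) }
  have hnorm : ∀ v : DiskSpace 𝕜 B, ‖v‖ = gauge B v.1 := fun _ => rfl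
  letI : NormedSpace 𝕜 (DiskSpace 𝕜 B) := by
    refine ⟨fun c v => ?_⟩
    rw [hnorm, hnorm]
    have h : (c • v).1 = c • v.1 := rfl
    rw [h, gauge_smul (𝕜 := 𝕜) hb c v.1]
  haveI : CompleteSpace (DiskSpace 𝕜 B) := by
    refine Metric.complete_of_cauchySeq_tendsto fun u hu => ?_
    have hcau : ∀ ε : ℝ, 0 < ε → ∃ N : ℕ, ∀ m ≥ N, ∀ n ≥ N,
        gauge B ((u m).1 - (u n).1) < ε := by
      intro ε hε
      obtain ⟨N, hN⟩ := Metric.cauchySeq_iff.1 hu ε hε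
      refine ⟨N, fun m hm n hn => ?_⟩
      have := hN m hm n hn
      rwa [dist_eq_norm] at this
    obtain ⟨v, hvspan, hconv⟩ := hcomp (fun n => (u n).1) (fun n => (u n).2) hcau
    have ha : ∃ a : DiskSpace 𝕜 B, a.1 = v := ⟨⟨v, hvspan⟩, rfl⟩
    obtain ⟨a, hav⟩ := ha
    refine ⟨a, ?_⟩
    rw [Metric.tendsto_atTop]
    intro ε hε
    obtain ⟨N, hN⟩ := hconv ε hε
    refine ⟨N, fun n hn => ?_⟩
    have h1 := hN n hn
    rw [dist_eq_norm]
    have h2 : ‖u n - a‖ = gauge B ((u n).1 - a.1) := rfl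
    rw [h2, hav, ← gauge_neg'' (𝕜 := 𝕜) hb, neg_sub]
    exact h1
  have hbd' : ∀ i, ∃ M, 0 ≤ M ∧ ∀ b ∈ B, ‖φ i b‖ ≤ M := by
    intro i
    obtain ⟨M, hM⟩ := hbd i
    refine ⟨M, ?_, hM⟩
    have := hM 0 h0
    simpa using this
  choose M hM0 hM using hbd'
  set ψ : ι → DiskSpace 𝕜 B →L[𝕜] 𝕜 := fun i =>
    LinearMap.mkContinuous ((φ i).comp (Submodule.span 𝕜 B).subtype) (M i)
      (fun v => norm_le_gauge_mul (hM0 i) (hM i) (habs v)) with hψ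
  have hψval : ∀ i (v : DiskSpace 𝕜 B), ψ i v = φ i v.1 := fun i v => rfl
  obtain ⟨C', hC'⟩ := banach_steinhaus (g := ψ) (fun v => by
    obtain ⟨C, hC⟩ := hpt v.1 v.2
    exact ⟨C, fun i => by rw [hψval]; exact hC i⟩)
  refine ⟨max C' 0, fun i b hbB => ?_⟩
  have hvb : ∃ vb : DiskSpace 𝕜 B, vb.1 = b := ⟨⟨b, Submodule.subset_span hbB⟩, rfl⟩
  obtain ⟨vb, hvbval⟩ := hvb
  have h1 : ‖φ i b‖ = ‖ψ i vb‖ := by rw [hψval, hvbval]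
  have h2 : ‖ψ i vb‖ ≤ ‖ψ i‖ * ‖vb‖ := (ψ i).le_opNorm vb
  have h3 : ‖vb‖ ≤ 1 := by
    rw [hnorm, hvbval]
    exact gauge_le_one_of_mem hbB
  have h4 : ‖ψ i‖ * ‖vb‖ ≤ max C' 0 * 1 :=
    mul_le_mul ((hC' i).trans (le_max_left _ _)) h3 (norm_nonneg _) (le_max_right _ _)
  rw [h1]; linarith [h2, h4]

end DiskSpaceAux

section BoundAux

open Set Pointwise

variable {𝕜 : Type} [RCLike 𝕜] {E : Type} [AddCommGroup E] [Module 𝕜 E]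
  [TopologicalSpace E]

lemma clm_bound_on_bounded (g : E →L[𝕜] 𝕜) {S : Set E} (hS : IsVonNBounded 𝕜 S) :
    ∃ M : ℝ, 0 ≤ M ∧ ∀ v ∈ S, ‖g v‖ ≤ M := by
  have hU : g ⁻¹' Metric.closedBall 0 1 ∈ 𝓝 (0 : E) := by
    apply g.continuous.continuousAt.preimage_mem_nhds
    rw [map_zero]
    exact Metric.closedBall_mem_nhds 0 one_pos
  obtain ⟨r, hr0, hr⟩ := (hS hU).exists_pos
  refine ⟨r, hr0.le, fun v hv => ?_⟩
  have hmem := hr ((r : ℝ) : 𝕜) (by rw [RCLike.norm_ofReal]; exact le_abs_self r) hv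
  obtain ⟨u, hu, rfl⟩ := hmem
  have hu1 : ‖g u‖ ≤ 1 := by simpa [Metric.mem_closedBall] using hu
  rw [map_smul, smul_eq_mul, norm_mul, RCLike.norm_ofReal, abs_of_pos hr0]
  nlinarith

variable [IsTopologicalAddGroup E] [ContinuousSMul 𝕜 E]

omit [ContinuousSMul 𝕜 E] in
lemma dual_bound {B' : Set (E →L[𝕜] 𝕜)} (hB' : IsVonNBounded 𝕜 B')
    {S : Set E} (hS : IsVonNBounded 𝕜 S) :
    ∃ C : ℝ, 0 ≤ C ∧ ∀ f ∈ B', ∀ v ∈ S, ‖f v‖ ≤ C := by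
  have hU : {f : E →L[𝕜] 𝕜 | ∀ v ∈ S, ‖f v‖ ≤ 1} ∈ 𝓝 (0 : E →L[𝕜] 𝕜) := by
    have hb := ContinuousLinearMap.hasBasis_nhds_zero (σ := RingHom.id 𝕜) (E := E) (F := 𝕜)
    refine Filter.mem_of_superset (hb.mem_of_mem (i := (S, Metric.closedBall 0 1))
      ⟨hS, Metric.closedBall_mem_nhds 0 one_pos⟩) ?_
    intro f hf v hv
    simpa [Metric.mem_closedBall, dist_zero_right] using hf v hv
  obtain ⟨r, hr0, hr⟩ := (hB' hU).exists_pos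
  refine ⟨r, hr0.le, fun f hf v hv => ?_⟩
  have hmem := hr ((r : ℝ) : 𝕜) (by rw [RCLike.norm_ofReal]; exact le_abs_self r) hf
  obtain ⟨g, hg, rfl⟩ := hmem
  have hg1 : ‖g v‖ ≤ 1 := hg v hv
  have happ : (((r : ℝ) : 𝕜) • g) v = ((r : ℝ) : 𝕜) • g v := rfl
  rw [happ, smul_eq_mul, norm_mul, RCLike.norm_ofReal, abs_of_pos hr0]
  nlinarith

end BoundAux

section FinRankAux

variable {𝕜 : Type} [RCLike 𝕜] {E : Type} [AddCommGroup E] [Module 𝕜 E]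
  [TopologicalSpace E] [IsTopologicalAddGroup E] [ContinuousSMul 𝕜 E] [T2Space E]

lemma finrank_decomp (T : E →L[𝕜] E) (hT : IsFiniteRank 𝕜 T) :
    ∃ (n : ℕ) (e : Fin n → E) (f : Fin n → E →L[𝕜] 𝕜),
      ∀ v : E, T v = ∑ k, f k v • e k := by
  haveI : FiniteDimensional 𝕜 (LinearMap.range (T : E →ₗ[𝕜] E)) := hT
  set W := LinearMap.range (T : E →ₗ[𝕜] E) with hW
  set b := Module.finBasis 𝕜 W with hb
  set Tres : E →L[𝕜] W := T.codRestrict W (fun v => LinearMap.mem_range_self _ v) with hTres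
  set f : Fin (Module.finrank 𝕜 W) → E →L[𝕜] 𝕜 := fun k =>
    (LinearMap.toContinuousLinearMap (b.coord k)).comp Tres with hf
  refine ⟨_, fun k => (b k : E), f, fun v => ?_⟩
  have hsum := b.sum_repr (Tres v)
  have hcoe : ((∑ k, b.repr (Tres v) k • b k : W) : E) = ((Tres v : W) : E) := by rw [hsum]
  rw [Submodule.coe_sum] at hcoe
  simp only [SetLike.val_smul] at hcoe
  have hTv : ((Tres v : W) : E) = T v := rfl
  rw [← hTv, ← hcoe]
  congr 1

end FinRankAux

section MainAux

variable {𝕜 : Type} [RCLike 𝕜] {E : Type} [AddCommGroup E] [Module 𝕜 E]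
  [UniformSpace E] [IsUniformAddGroup E] [ContinuousSMul 𝕜 E]
  [Module ℝ E] [IsScalarTower ℝ 𝕜 E] [T2Space E]

/-- Uniform bound for a weakly bounded family of weakly continuous operators,
uniformly over Banach disks `B` and `B'`. -/
lemma key_bound {ι : Type} (Aν : ι → E →ₗ[𝕜] E) (hw : ∀ ν, IsWeaklyContinuous 𝕜 (Aν ν))
    (hbd : ∀ (v : E) (f : E →L[𝕜] 𝕜), ∃ C : ℝ, ∀ ν, ‖f (Aν ν v)‖ ≤ C)
    {B : Set E} {B' : Set (E →L[𝕜] 𝕜)} (hB : IsBanachDisk 𝕜 B) (hB' : IsBanachDisk 𝕜 B') :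
    ∃ C : ℝ, ∀ ν, ∀ f ∈ B', ∀ b ∈ B, ‖f (Aν ν b)‖ ≤ C := by
  have step1 : ∀ v : E, ∃ C, ∀ ν, ∀ f ∈ B', ‖f (Aν ν v)‖ ≤ C := by
    intro v
    set φ : ι → (E →L[𝕜] 𝕜) →ₗ[𝕜] 𝕜 := fun ν =>
      { toFun := fun f => f (Aν ν v)
        map_add' := fun f g => rfl
        map_smul' := fun c f => rfl } with hφ
    obtain ⟨C, hC⟩ := disk_uniform_bound hB' φ
      (fun ν => by
        obtain ⟨M, _, hM⟩ := dual_bound hB'.2.2.1 (isVonNBounded_singleton (Aν ν v))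
        exact ⟨M, fun f hf => hM f hf _ rfl⟩)
      (fun f _ => by
        obtain ⟨C, hC⟩ := hbd v f
        exact ⟨C, fun ν => hC ν⟩)
    exact ⟨C, fun ν f hf => hC ν f hf⟩
  choose Cv hCv using step1
  obtain ⟨C, hC⟩ := disk_uniform_bound hB
    (ι := ι × {f : E →L[𝕜] 𝕜 // f ∈ B'})
    (fun p => (p.2.1 : E →ₗ[𝕜] 𝕜).comp (Aν p.1))
    (fun p => by
      have hcont : Continuous fun v => p.2.1 (Aν p.1 v) := hw p.1 p.2.1
      set g : E →L[𝕜] 𝕜 := ⟨(p.2.1 : E →ₗ[𝕜] 𝕜).comp (Aν p.1), hcont⟩ with hg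
      obtain ⟨M, _, hM⟩ := clm_bound_on_bounded g hB.2.2.1
      exact ⟨M, fun b hbB => hM b hbB⟩)
    (fun v _ => ⟨Cv v, fun p => hCv v p.1 p.2.1 p.2.2⟩)
  exact ⟨C, fun ν f hf b hbB => hC (ν, ⟨f, hf⟩) b hbB⟩

/-- Weak-operator convergence plus weak boundedness implies convergence of the traces
`∑ λᵢ ⟨x'ᵢ, Aν xᵢ⟩`. -/
lemma tendsto_trace {ι : Type} {lfil : Filter ι}
    (Aν : ι → E →ₗ[𝕜] E) (hw : ∀ ν, IsWeaklyContinuous 𝕜 (Aν ν)) (A : E →ₗ[𝕜] E)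
    (hconv : ∀ (v : E) (f : E →L[𝕜] 𝕜), Tendsto (fun ν => f (Aν ν v)) lfil (𝓝 (f (A v))))
    (hbdd : ∀ (v : E) (f : E →L[𝕜] 𝕜), ∃ C : ℝ, ∀ ν, ‖f (Aν ν v)‖ ≤ C)
    {F : E → E} {l : ℕ → 𝕜} {x : ℕ → E} {x' : ℕ → E →L[𝕜] 𝕜}
    (hrep : FredholmRep 𝕜 F l x x') :
    Tendsto (fun ν => ∑' i, l i * x' i (Aν ν (x i))) lfil
      (𝓝 (∑' i, l i * x' i (A (x i)))) := by
  obtain ⟨⟨hsum, ⟨B, hB, hxB⟩, ⟨B', hB', hx'B'⟩⟩, hFconv⟩ := hrep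
  obtain ⟨C, hC⟩ := key_bound Aν hw hbdd hB hB'
  refine tendsto_tsum_of_dominated_convergence (bound := fun i => ‖l i‖ * C)
    (hsum.mul_right C) (fun i => (hconv (x i) (x' i)).const_mul (l i))
    (Eventually.of_forall fun ν => fun i => ?_)
  rw [norm_mul]
  exact mul_le_mul_of_nonneg_left (hC ν (x' i) (hx'B' i) (x i) (hxB i)) (norm_nonneg _)

/-- The trace of a Fredholm representation against a finite-rank operator
`T = ∑ₖ fₖ ⊗ eₖ` only depends on the represented operator. -/
lemma trace_rep_eq {A : E → E} {l : ℕ → 𝕜} {x : ℕ → E} {x' : ℕ → E →L[𝕜] 𝕜}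
    (hrep : FredholmRep 𝕜 A l x x') {n : ℕ} (e : Fin n → E) (f : Fin n → E →L[𝕜] 𝕜)
    {T : E → E} (hT : ∀ v : E, T v = ∑ k, f k v • e k) :
    ∑' i, l i * x' i (T (x i)) = ∑ k, f k (A (e k)) := by
  obtain ⟨⟨hsum, ⟨B, hB, hxB⟩, ⟨B', hB', hx'B'⟩⟩, hconv⟩ := hrep
  set h : Fin n → ℕ → 𝕜 := fun k i => l i * (f k (x i) * x' i (e k)) with hh
  have hsummable : ∀ k, Summable (h k) := by
    intro k
    obtain ⟨C1, hC10, hC1⟩ := dual_bound hB'.2.2.1 (isVonNBounded_singleton (e k))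
    obtain ⟨C2, hC20, hC2⟩ := clm_bound_on_bounded (f k) hB.2.2.1
    refine Summable.of_norm_bounded (g := fun i => ‖l i‖ * (C2 * C1)) (hsum.mul_right _)
      (fun i => ?_)
    rw [hh]
    simp only [norm_mul]
    have hb1 : ‖x' i (e k)‖ ≤ C1 := hC1 (x' i) (hx'B' i) (e k) rfl
    have hb2 : ‖f k (x i)‖ ≤ C2 := hC2 (x i) (hxB i)
    have : ‖f k (x i)‖ * ‖x' i (e k)‖ ≤ C2 * C1 :=
      mul_le_mul hb2 hb1 (norm_nonneg _) hC20
    exact mul_le_mul_of_nonneg_left this (norm_nonneg _)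
  have hval : ∀ k, ∑' i, h k i = f k (A (e k)) := by
    intro k
    have ht1 := hconv (e k)
    have ht2 : Tendsto (fun m => f k (∑ i ∈ Finset.range m, (l i * x' i (e k)) • x i))
        atTop (𝓝 (f k (A (e k)))) := ((f k).continuous.tendsto _).comp ht1
    have heq : ∀ m, f k (∑ i ∈ Finset.range m, (l i * x' i (e k)) • x i)
        = ∑ i ∈ Finset.range m, h k i := by
      intro m
      rw [map_sum]
      refine Finset.sum_congr rfl fun i _ => ?_
      rw [map_smul, smul_eq_mul, hh]; ring
    rw [funext heq] at ht2
    exact tendsto_nhds_unique ((hsummable k).hasSum.tendsto_sum_nat) ht2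
  have hexpand : ∀ i, l i * x' i (T (x i)) = ∑ k, h k i := by
    intro i
    rw [hT, map_sum, Finset.mul_sum]
    refine Finset.sum_congr rfl fun k _ => ?_
    rw [map_smul, smul_eq_mul, hh]
  calc ∑' i, l i * x' i (T (x i)) = ∑' i, ∑ k, h k i := tsum_congr hexpand
    _ = ∑ k, ∑' i, h k i := Summable.tsum_finsetSum (fun k _ => hsummable k)
    _ = ∑ k, f k (A (e k)) := Finset.sum_congr rfl fun k _ => hval k

end MainAux


variable {𝕜 : Type} [RCLike 𝕜] {E : Type} [AddCommGroup E] [Module 𝕜 E]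
  [UniformSpace E] [IsUniformAddGroup E] [ContinuousSMul 𝕜 E]
  [Module ℝ E] [IsScalarTower ℝ 𝕜 E] [LocallyConvexSpace ℝ E] [T2Space E]

/-- Suppose `E` possesses the bounded approximation property. Then the
trace of every Fredholm operator on `E` is well-defined: any two Fredholm
representations of the same operator yield the same value `∑_{i=1}^∞ λ_i ⟨x'_i, x_i⟩`.
Moreover, if a net `{A_ν}` of weakly continuous operators converges to `A` in the weak
operator topology and is bounded in that topology, then `tr (F ∘ A_ν) → tr (F ∘ A)`
for every Fredholm operator `F` (where `tr (F ∘ C) = ∑_{i=1}^∞ λ_i ⟨x'_i, C x_i⟩`). -/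
theorem statement13 (hbap : HasBAP 𝕜 E) :
    (∀ (A : E → E) (l : ℕ → 𝕜) (x : ℕ → E) (x' : ℕ → E →L[𝕜] 𝕜)
        (μ : ℕ → 𝕜) (y : ℕ → E) (y' : ℕ → E →L[𝕜] 𝕜),
      FredholmRep 𝕜 A l x x' → FredholmRep 𝕜 A μ y y' →
      ∑' i, l i * x' i (x i) = ∑' j, μ j * y' j (y j)) ∧
    (∀ (ι : Type) (lfil : Filter ι), lfil.NeBot →
      ∀ (Aν : ι → E →ₗ[𝕜] E), (∀ ν, IsWeaklyContinuous 𝕜 (Aν ν)) →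
      ∀ A : E →ₗ[𝕜] E,
        (∀ (v : E) (f : E →L[𝕜] 𝕜),
          Filter.Tendsto (fun ν => f (Aν ν v)) lfil (𝓝 (f (A v)))) →
        (∀ (v : E) (f : E →L[𝕜] 𝕜), ∃ C : ℝ, ∀ ν, ‖f (Aν ν v)‖ ≤ C) →
        ∀ (F : E → E) (l : ℕ → 𝕜) (x : ℕ → E) (x' : ℕ → E →L[𝕜] 𝕜),
          FredholmRep 𝕜 F l x x' →
          Filter.Tendsto (fun ν => ∑' i, l i * x' i (Aν ν (x i))) lfil
            (𝓝 (∑' i, l i * x' i (A (x i))))) := by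
  have part2 : ∀ (ι : Type) (lfil : Filter ι), lfil.NeBot →
      ∀ (Aν : ι → E →ₗ[𝕜] E), (∀ ν, IsWeaklyContinuous 𝕜 (Aν ν)) →
      ∀ A : E →ₗ[𝕜] E,
        (∀ (v : E) (f : E →L[𝕜] 𝕜),
          Filter.Tendsto (fun ν => f (Aν ν v)) lfil (𝓝 (f (A v)))) →
        (∀ (v : E) (f : E →L[𝕜] 𝕜), ∃ C : ℝ, ∀ ν, ‖f (Aν ν v)‖ ≤ C) →
        ∀ (F : E → E) (l : ℕ → 𝕜) (x : ℕ → E) (x' : ℕ → E →L[𝕜] 𝕜),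
          FredholmRep 𝕜 F l x x' →
          Filter.Tendsto (fun ν => ∑' i, l i * x' i (Aν ν (x i))) lfil
            (𝓝 (∑' i, l i * x' i (A (x i)))) := by
    intro ι lfil _ Aν hw A hconv hbd F l x x' hrep
    exact tendsto_trace Aν hw A hconv hbd hrep
  refine ⟨?_, part2⟩
  intro A l x x' μ y y' hrep1 hrep2
  obtain ⟨ιb, lb, T, hneb, hfr, hconvb, hbdb⟩ := hbap
  haveI := hneb
  have hwc : ∀ ν, IsWeaklyContinuous 𝕜 ((T ν) : E →ₗ[𝕜] E) :=
    fun ν g => g.continuous.comp (T ν).continuous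
  have hconv' : ∀ (v : E) (g : E →L[𝕜] 𝕜),
      Tendsto (fun ν => g (((T ν) : E →ₗ[𝕜] E) v)) lb
        (𝓝 (g ((LinearMap.id : E →ₗ[𝕜] E) v))) := fun v g => hconvb v g
  have hbd' : ∀ (v : E) (g : E →L[𝕜] 𝕜), ∃ C : ℝ, ∀ ν,
      ‖g (((T ν) : E →ₗ[𝕜] E) v)‖ ≤ C := fun v g => hbdb v g
  have h1 := tendsto_trace (fun ν => ((T ν) : E →ₗ[𝕜] E)) hwc LinearMap.id hconv' hbd' hrep1
  have h2 := tendsto_trace (fun ν => ((T ν) : E →ₗ[𝕜] E)) hwc LinearMap.id hconv' hbd' hrep2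
  have heq : ∀ ν, ∑' i, l i * x' i (((T ν) : E →ₗ[𝕜] E) (x i))
      = ∑' j, μ j * y' j (((T ν) : E →ₗ[𝕜] E) (y j)) := by
    intro ν
    obtain ⟨n, e, f, hTdec⟩ := finrank_decomp (T ν) (hfr ν)
    have hTdec' : ∀ v : E, ((T ν) : E →ₗ[𝕜] E) v = ∑ k, f k v • e k := hTdec
    rw [trace_rep_eq hrep1 e f hTdec', trace_rep_eq hrep2 e f hTdec']
  have h2' : Tendsto (fun ν => ∑' i, l i * x' i (((T ν) : E →ₗ[𝕜] E) (x i))) lb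
      (𝓝 (∑' j, μ j * y' j ((LinearMap.id : E →ₗ[𝕜] E) (y j)))) :=
    h2.congr (fun ν => (heq ν).symm)
  have hfin := tendsto_nhds_unique h1 h2'
  simpa using hfin
end
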